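/- arXiv:2110.15812 — 5 statements merged into one kernel-verified Lean document; each statement's English description precedes it below -/
import Mathlib

section
/- Let Φ be a Young function, C¹ on [0,∞), C² on (0,∞), with Φ''>0 on (0,∞) and with lim_{s→0+} Φ'(s)/s = 0, and suppose 1 < m̃ := inf_{s>0} sΦ''(s)/Φ'(s) and M̃ := sup_{s>0} sΦ''(s)/Φ'(s) < ∞. Then for every t ∈ (0,∞): (1/(M̃−1)) · Φ'(t)/t ≤ ∫_0^t Φ'(s)/s² ds ≤ (1/(m̃−1)) · Φ'(t)/t. In particular, s ↦ Φ'(s)/s² is integrable near 0. -/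
open Set Filter MeasureTheory

open Topology

theorem integral_phi_prime_div_sq_bounds
    (Φ : ℝ → ℝ) (mt Mt : ℝ)
    (hconv : ConvexOn ℝ (Ici 0) Φ) (h0 : Φ 0 = 0)
    (hlim0 : Tendsto (fun s => Φ s / s) (nhdsWithin 0 (Ioi 0)) (nhds 0))
    (hlimtop : Tendsto (fun s => Φ s / s) atTop atTop)
    (hC1 : ContDiffOn ℝ 1 Φ (Ici 0)) (hC2 : ContDiffOn ℝ 2 Φ (Ioi 0))
    (hΦ'' : ∀ s ∈ Ioi (0:ℝ), 0 < deriv (deriv Φ) s)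
    (hlim' : Tendsto (fun s => deriv Φ s / s) (nhdsWithin 0 (Ioi 0)) (nhds 0))
    (hmt : mt = sInf {x : ℝ | ∃ s ∈ Ioi (0:ℝ), x = s * deriv (deriv Φ) s / deriv Φ s})
    (hMt : Mt = sSup {x : ℝ | ∃ s ∈ Ioi (0:ℝ), x = s * deriv (deriv Φ) s / deriv Φ s})
    (hbdd : BddAbove {x : ℝ | ∃ s ∈ Ioi (0:ℝ), x = s * deriv (deriv Φ) s / deriv Φ s})
    (hmt1 : 1 < mt) :
    ∀ t ∈ Ioi (0:ℝ),
      IntegrableOn (fun s => deriv Φ s / s ^ 2) (Ioc 0 t) ∧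
      (1 / (Mt - 1)) * (deriv Φ t / t) ≤ ∫ s in Ioc (0:ℝ) t, deriv Φ s / s ^ 2 ∧
      ∫ s in Ioc (0:ℝ) t, deriv Φ s / s ^ 2 ≤ (1 / (mt - 1)) * (deriv Φ t / t) := by
  intro t ht
  simp only [mem_Ioi] at ht
  set S := {x : ℝ | ∃ s ∈ Ioi (0:ℝ), x = s * deriv (deriv Φ) s / deriv Φ s} with hS
  set φ := deriv Φ with hφdef
  set ψ := deriv (deriv Φ) with hψdef
  have hbddB : BddBelow S := by
    by_contra h
    rw [hmt, Real.sInf_of_not_bddBelow h] at hmt1; linarith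
  have hmem : ∀ s, 0 < s → s * ψ s / φ s ∈ S := fun s hs => ⟨s, hs, rfl⟩
  have hmtle : ∀ s, 0 < s → mt ≤ s * ψ s / φ s := fun s hs =>
    hmt ▸ csInf_le hbddB (hmem s hs)
  have hMtge : ∀ s, 0 < s → s * ψ s / φ s ≤ Mt := fun s hs =>
    hMt ▸ le_csSup hbdd (hmem s hs)
  have hφpos : ∀ s, 0 < s → 0 < φ s := by
    intro s hs
    rcases lt_trichotomy (φ s) 0 with h | h | h
    · have : s * ψ s / φ s < 0 := div_neg_of_pos_of_neg (mul_pos hs (hΦ'' s hs)) h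
      linarith [hmtle s hs]
    · have := hmtle s hs
      rw [h, div_zero] at this; linarith
    · exact h
  have hMt1 : 1 < Mt := lt_of_lt_of_le hmt1 ((hmtle 1 one_pos).trans (hMtge 1 one_pos))
  have hmt1' : (0:ℝ) < mt - 1 := by linarith
  have hMt1' : (0:ℝ) < Mt - 1 := by linarith
  -- regularity
  have hφC1 : ContDiffOn ℝ 1 φ (Ioi 0) := hC2.deriv_of_isOpen (m := 1) isOpen_Ioi (by norm_num)
  have hφcont : ContinuousOn φ (Ioi 0) := hφC1.continuousOn
  have hψcont : ContinuousOn ψ (Ioi 0) :=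
    (hφC1.deriv_of_isOpen (m := 0) isOpen_Ioi le_rfl).continuousOn
  have hφderiv : ∀ s ∈ Ioi (0:ℝ), HasDerivAt φ (ψ s) s := by
    intro s hs
    exact ((hφC1.differentiableOn one_ne_zero s hs).differentiableAt
      (isOpen_Ioi.mem_nhds hs)).hasDerivAt
  set f : ℝ → ℝ := fun s => φ s / s ^ 2 with hfdef
  set g : ℝ → ℝ := fun s => φ s / s with hgdef
  set g' : ℝ → ℝ := fun s => (ψ s * s - φ s) / s ^ 2 with hg'def
  have hgderiv : ∀ s ∈ Ioi (0:ℝ), HasDerivAt g (g' s) s := by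
    intro s hs
    have h := (hφderiv s hs).div (hasDerivAt_id s) (ne_of_gt hs)
    have h2 : HasDerivAt g ((ψ s * id s - φ s * 1) / id s ^ 2) s := h
    simpa [g', mul_one] using h2
  have hkey : ∀ s ∈ Ioi (0:ℝ), (mt - 1) * f s ≤ g' s ∧ g' s ≤ (Mt - 1) * f s := by
    intro s hs
    simp only [mem_Ioi] at hs
    have hφp := hφpos s hs
    have hs2 : (0:ℝ) < s ^ 2 := by positivity
    have h1 : mt * φ s ≤ s * ψ s := by
      have h := hmtle s hs
      rw [le_div_iff₀ hφp] at h; linarith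
    have h2 : s * ψ s ≤ Mt * φ s := by
      have h := hMtge s hs
      rw [div_le_iff₀ hφp] at h; linarith
    constructor
    · have hnum : (mt - 1) * φ s ≤ ψ s * s - φ s := by nlinarith
      calc (mt - 1) * (φ s / s ^ 2) = ((mt - 1) * φ s) / s ^ 2 := by ring
        _ ≤ (ψ s * s - φ s) / s ^ 2 := by gcongr
    · have hnum : ψ s * s - φ s ≤ (Mt - 1) * φ s := by nlinarith
      calc (ψ s * s - φ s) / s ^ 2 ≤ ((Mt - 1) * φ s) / s ^ 2 := by gcongr
        _ = (Mt - 1) * (φ s / s ^ 2) := by ring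
  have hf_nonneg : ∀ s ∈ Ioi (0:ℝ), 0 ≤ f s := by
    intro s hs
    exact div_nonneg (hφpos s hs).le (sq_nonneg s)
  have hfcont : ContinuousOn f (Ioi 0) :=
    hφcont.div ((continuous_pow 2).continuousOn)
      (fun s hs => by have : (0:ℝ) < s := hs; positivity)
  have hg'cont : ContinuousOn g' (Ioi 0) :=
    ((hψcont.mul continuousOn_id).sub hφcont).div ((continuous_pow 2).continuousOn)
      (fun s hs => by have : (0:ℝ) < s := hs; positivity)
  have hgcont : ContinuousOn g (Ioi 0) :=
    hφcont.div continuousOn_id (fun s hs => ne_of_gt hs)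
  -- FTC bounds on [ε, t]
  have hFTC : ∀ ε ∈ Ioc (0:ℝ) t,
      (mt - 1) * ∫ s in Ioc ε t, f s ≤ g t - g ε ∧
      g t - g ε ≤ (Mt - 1) * ∫ s in Ioc ε t, f s := by
    rintro ε ⟨hε0, hεt⟩
    have hsub : Icc ε t ⊆ Ioi 0 := fun x hx => lt_of_lt_of_le hε0 hx.1
    have hfint : IntervalIntegrable f volume ε t :=
      (hfcont.mono hsub).intervalIntegrable_of_Icc hεt
    have hg'int : IntervalIntegrable g' volume ε t :=
      (hg'cont.mono hsub).intervalIntegrable_of_Icc hεt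
    have hFTC0 : ∫ s in ε..t, g' s = g t - g ε := by
      apply intervalIntegral.integral_eq_sub_of_hasDerivAt _ hg'int
      intro x hx
      exact hgderiv x (hsub ((uIcc_of_le hεt) ▸ hx))
    have hmono1 : ∫ s in ε..t, (mt - 1) * f s ≤ ∫ s in ε..t, g' s :=
      intervalIntegral.integral_mono_on hεt (hfint.const_mul _) hg'int
        (fun x hx => (hkey x (hsub hx)).1)
    have hmono2 : ∫ s in ε..t, g' s ≤ ∫ s in ε..t, (Mt - 1) * f s :=
      intervalIntegral.integral_mono_on hεt hg'int (hfint.const_mul _)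
        (fun x hx => (hkey x (hsub hx)).2)
    rw [hFTC0, intervalIntegral.integral_const_mul, intervalIntegral.integral_of_le hεt] at hmono1
    rw [hFTC0, intervalIntegral.integral_const_mul, intervalIntegral.integral_of_le hεt] at hmono2
    exact ⟨hmono1, hmono2⟩
  -- integrability near 0
  set G : ℝ → ℝ := fun s => if s = 0 then 0 else φ s / s with hGdef
  have hGg : ∀ s, 0 < s → G s = g s := fun s hs => by
    simp only [G, g, if_neg (ne_of_gt hs)]
  have hGcont : ContinuousOn G (Icc 0 t) := by
    intro x hx
    rcases eq_or_lt_of_le hx.1 with h0 | h0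
    · apply ContinuousWithinAt.mono _ (Icc_subset_Ici_self)
      rw [← h0, ← continuousWithinAt_Ioi_iff_Ici]
      have hG0 : G 0 = 0 := by simp [G]
      unfold ContinuousWithinAt
      rw [hG0]
      apply hlim'.congr'
      filter_upwards [self_mem_nhdsWithin] with s hs
      exact (hGg s hs).symm
    · apply ContinuousAt.continuousWithinAt
      have hev : g =ᶠ[nhds x] G := by
        filter_upwards [isOpen_Ioi.mem_nhds h0] with s hs
        exact (hGg s hs).symm
      exact ((hgcont x h0).continuousAt (isOpen_Ioi.mem_nhds h0)).congr hev
  have hg'int0 : IntegrableOn g' (Ioc 0 t) := by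
    apply intervalIntegral.integrableOn_deriv_of_nonneg hGcont
    · intro x hx
      apply (hgderiv x hx.1).congr_of_eventuallyEq
      filter_upwards [isOpen_Ioi.mem_nhds hx.1] with s hs
      exact hGg s hs
    · intro x hx
      have := (hkey x hx.1).1
      nlinarith [hf_nonneg x hx.1]
  have hfmeas : AEStronglyMeasurable f (volume.restrict (Ioc 0 t)) :=
    (hfcont.mono Ioc_subset_Ioi_self).aestronglyMeasurable measurableSet_Ioc
  have hfint0 : IntegrableOn f (Ioc 0 t) := by
    apply Integrable.mono' (hg'int0.const_mul ((mt - 1)⁻¹)) hfmeas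
    rw [ae_restrict_iff' measurableSet_Ioc]
    filter_upwards with x hx
    have hk := (hkey x hx.1).1
    have hfx := hf_nonneg x hx.1
    rw [Real.norm_eq_abs, abs_of_nonneg hfx, inv_mul_eq_div, le_div_iff₀ hmt1']
    nlinarith [hk]
  -- sequence of shrinking intervals
  set a : ℕ → ℝ := fun n => t / (n + 1) with hadef
  have ha_pos : ∀ n, 0 < a n := fun n => div_pos ht (by positivity)
  have ha_le : ∀ n, a n ≤ t := by
    intro n
    rw [hadef, div_le_iff₀ (by positivity)]
    nlinarith [Nat.cast_nonneg (α := ℝ) n]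
  have ha_anti : ∀ m n : ℕ, m ≤ n → a n ≤ a m := by
    intro m n hmn
    show t / ((n : ℝ) + 1) ≤ t / ((m : ℝ) + 1)
    gcongr
  have hmonoS : Monotone (fun n : ℕ => Ioc (a n) t) := fun m n hmn =>
    Ioc_subset_Ioc_left (ha_anti m n hmn)
  have hUnion : ⋃ n, Ioc (a n) t = Ioc 0 t := by
    ext x
    simp only [mem_iUnion, mem_Ioc]
    constructor
    · rintro ⟨n, h1, h2⟩
      exact ⟨(ha_pos n).trans h1, h2⟩
    · rintro ⟨hx0, hxt⟩
      obtain ⟨n, hn⟩ := exists_nat_gt (t / x)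
      refine ⟨n, ?_, hxt⟩
      rw [hadef]
      rw [div_lt_iff₀ hx0] at hn
      rw [div_lt_iff₀ (by positivity)]
      nlinarith
  have htend_int : Tendsto (fun n => ∫ s in Ioc (a n) t, f s) atTop
      (𝓝 (∫ s in Ioc (0:ℝ) t, f s)) := by
    have h := tendsto_setIntegral_of_monotone (fun n => measurableSet_Ioc) hmonoS
      (hUnion ▸ hfint0)
    rwa [hUnion] at h
  have htend_a : Tendsto a atTop (nhdsWithin 0 (Ioi 0)) := by
    apply tendsto_nhdsWithin_of_tendsto_nhds_of_eventually_within
    · have h1 : Tendsto (fun n : ℕ => (n : ℝ) + 1) atTop atTop :=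
        tendsto_atTop_add_const_right _ 1 tendsto_natCast_atTop_atTop
      exact Tendsto.div_atTop tendsto_const_nhds h1
    · exact Eventually.of_forall fun n => ha_pos n
  have htend_g : Tendsto (fun n => g (a n)) atTop (𝓝 0) := by
    apply Tendsto.congr _ (hlim'.comp htend_a)
    intro n; rfl
  have hIneq : ∀ n, (mt - 1) * ∫ s in Ioc (a n) t, f s ≤ g t - g (a n) ∧
      g t - g (a n) ≤ (Mt - 1) * ∫ s in Ioc (a n) t, f s :=
    fun n => hFTC (a n) ⟨ha_pos n, ha_le n⟩
  have hlim_sub : Tendsto (fun n => g t - g (a n)) atTop (𝓝 (g t)) := by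
    have h := Tendsto.sub
      (tendsto_const_nhds : Tendsto (fun _ : ℕ => g t) atTop (𝓝 (g t))) htend_g
    simpa using h
  have hlower : g t ≤ (Mt - 1) * ∫ s in Ioc (0:ℝ) t, f s :=
    le_of_tendsto_of_tendsto' hlim_sub (htend_int.const_mul _) fun n => (hIneq n).2
  have hupper : (mt - 1) * ∫ s in Ioc (0:ℝ) t, f s ≤ g t :=
    le_of_tendsto_of_tendsto' (htend_int.const_mul _) hlim_sub fun n => (hIneq n).1
  refine ⟨hfint0, ?_, ?_⟩
  · rw [show (1 / (Mt - 1)) * (φ t / t) = g t / (Mt - 1) by rw [hgdef]; ring,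
      div_le_iff₀ hMt1']
    linarith [hlower]
  · rw [show (1 / (mt - 1)) * (φ t / t) = g t / (mt - 1) by rw [hgdef]; ring,
      le_div_iff₀ hmt1']
    linarith [hupper]
end

section
/- Let Ψ be a Young function, C¹ on [0,∞), C² on (0,∞), with Ψ'' > 0 on (0,∞), lim_{s→0+} Ψ'(s)/s = ∞, and suppose 0 < 1/M̃ := inf_{s>0} sΨ''(s)/Ψ'(s) and 1/m̃ := sup_{s>0} sΨ''(s)/Ψ'(s) < 1 (so 1 < m̃ ≤ M̃ < ∞). Then for every t ∈ (0,∞): (M̃/(M̃−1)) · t/Ψ'(t) ≤ ∫_0^t ds/Ψ'(s) ≤ (m̃/(m̃−1)) · t/Ψ'(t). In particular, s ↦ 1/Ψ'(s) is integrable near 0. -/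
open Set Filter MeasureTheory

theorem integral_inv_psi_prime_bounds
    (Ψ : ℝ → ℝ) (mt Mt : ℝ)
    (hconv : ConvexOn ℝ (Ici 0) Ψ) (h0 : Ψ 0 = 0)
    (hlim0 : Tendsto (fun s => Ψ s / s) (nhdsWithin 0 (Ioi 0)) (nhds 0))
    (hlimtop : Tendsto (fun s => Ψ s / s) atTop atTop)
    (hC1 : ContDiffOn ℝ 1 Ψ (Ici 0)) (hC2 : ContDiffOn ℝ 2 Ψ (Ioi 0))
    (hΨ'' : ∀ s ∈ Ioi (0:ℝ), 0 < deriv (deriv Ψ) s)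
    (hlim' : Tendsto (fun s => deriv Ψ s / s) (nhdsWithin 0 (Ioi 0)) atTop)
    (hMt : Mt⁻¹ = sInf {x : ℝ | ∃ s ∈ Ioi (0:ℝ), x = s * deriv (deriv Ψ) s / deriv Ψ s})
    (hmt : mt⁻¹ = sSup {x : ℝ | ∃ s ∈ Ioi (0:ℝ), x = s * deriv (deriv Ψ) s / deriv Ψ s})
    (hpos : 0 < sInf {x : ℝ | ∃ s ∈ Ioi (0:ℝ), x = s * deriv (deriv Ψ) s / deriv Ψ s})
    (hlt1 : sSup {x : ℝ | ∃ s ∈ Ioi (0:ℝ), x = s * deriv (deriv Ψ) s / deriv Ψ s} < 1)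
    (hmtpos : 1 < mt) (hMtfin : mt ≤ Mt) :
    ∀ t ∈ Ioi (0:ℝ),
      IntegrableOn (fun s => (deriv Ψ s)⁻¹) (Ioc 0 t) ∧
      (Mt / (Mt - 1)) * (t / deriv Ψ t) ≤ ∫ s in Ioc (0:ℝ) t, (deriv Ψ s)⁻¹ ∧
      ∫ s in Ioc (0:ℝ) t, (deriv Ψ s)⁻¹ ≤ (mt / (mt - 1)) * (t / deriv Ψ t) := by
  -- the derivative of Ψ is C¹ on (0,∞)
  have hd1 : ContDiffOn ℝ 1 (deriv Ψ) (Ioi 0) :=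
    hC2.deriv_of_isOpen isOpen_Ioi (by norm_num)
  have hΨ''d : ∀ s ∈ Ioi (0:ℝ), HasDerivAt (deriv Ψ) (deriv (deriv Ψ) s) s := fun s hs =>
    ((hd1.differentiableOn one_ne_zero).differentiableAt (Ioi_mem_nhds hs)).hasDerivAt
  have hΨ'cont : ContinuousOn (deriv Ψ) (Ioi 0) := fun s hs =>
    ((hΨ''d s hs).differentiableAt.continuousAt).continuousWithinAt
  have hΨ'mono : StrictMonoOn (deriv Ψ) (Ioi 0) := by
    apply strictMonoOn_of_deriv_pos (convex_Ioi 0) hΨ'cont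
    intro x hx; rw [interior_Ioi] at hx; exact hΨ'' x hx
  -- positivity of Ψ'
  have hΨ'pos : ∀ s ∈ Ioi (0:ℝ), 0 < deriv Ψ s := by
    intro s hs
    have h1 : ∀ᶠ x in nhdsWithin 0 (Ioi 0), (1:ℝ) ≤ deriv Ψ x / x :=
      hlim'.eventually_ge_atTop 1
    have h2 : Ioo (0:ℝ) s ∈ nhdsWithin 0 (Ioi 0) := by
      rw [show Ioo (0:ℝ) s = Ioi 0 ∩ Iio s from rfl]
      exact inter_mem_nhdsWithin _ (Iio_mem_nhds hs)
    obtain ⟨x, hx1, hx2⟩ := (h1.and h2).exists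
    have hxpos : 0 < x := hx2.1
    have : (0:ℝ) < deriv Ψ x := by
      have := (le_div_iff₀ hxpos).1 hx1
      linarith
    exact lt_trans this (hΨ'mono hxpos hs hx2.2)
  -- bounds on s Ψ''/Ψ'
  set S : Set ℝ := {x : ℝ | ∃ s ∈ Ioi (0:ℝ), x = s * deriv (deriv Ψ) s / deriv Ψ s} with hS
  have hSbb : BddBelow S := by
    refine ⟨0, fun x hx => ?_⟩
    obtain ⟨s, hs, rfl⟩ := hx
    exact div_nonneg (mul_nonneg (le_of_lt hs) (le_of_lt (hΨ'' s hs)))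
      (le_of_lt (hΨ'pos s hs))
  have hSba : BddAbove S := by
    by_contra hna
    rw [Real.sSup_of_not_bddAbove hna] at hmt
    have : (0:ℝ) < mt⁻¹ := inv_pos.2 (lt_trans one_pos hmtpos)
    rw [hmt] at this; exact lt_irrefl 0 this
  have hub : ∀ s ∈ Ioi (0:ℝ), s * deriv (deriv Ψ) s / deriv Ψ s ≤ mt⁻¹ := by
    intro s hs; rw [hmt]; exact le_csSup hSba ⟨s, hs, rfl⟩
  have hlb : ∀ s ∈ Ioi (0:ℝ), Mt⁻¹ ≤ s * deriv (deriv Ψ) s / deriv Ψ s := by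
    intro s hs; rw [hMt]; exact csInf_le hSbb ⟨s, hs, rfl⟩
  have hMt1 : 1 < Mt := lt_of_lt_of_le hmtpos hMtfin
  have hcm : 0 < 1 - mt⁻¹ := by
    have : mt⁻¹ < 1 := by
      rw [inv_lt_one_iff₀]; right; exact hmtpos
    linarith
  have hcM : 0 < 1 - Mt⁻¹ := by
    have : Mt⁻¹ < 1 := by
      rw [inv_lt_one_iff₀]; right; exact hMt1
    linarith
  -- the auxiliary function g
  set g : ℝ → ℝ := fun s => s / deriv Ψ s with hgdef
  set g' : ℝ → ℝ := fun s =>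
    (deriv Ψ s - s * deriv (deriv Ψ) s) / (deriv Ψ s)^2 with hg'def
  have hg : ∀ x ∈ Ioi (0:ℝ), HasDerivAt g (g' x) x := by
    intro x hx
    have := (hasDerivAt_id x).div (hΨ''d x hx) (ne_of_gt (hΨ'pos x hx))
    simp only [one_mul, id_eq] at this; exact this
  -- bounds on g'
  have hbound : ∀ x ∈ Ioi (0:ℝ),
      (1 - mt⁻¹) * (deriv Ψ x)⁻¹ ≤ g' x ∧ g' x ≤ (1 - Mt⁻¹) * (deriv Ψ x)⁻¹ := by
    intro x hx
    have hp := hΨ'pos x hx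
    have hne : deriv Ψ x ≠ 0 := ne_of_gt hp
    have hid : g' x = (1 - x * deriv (deriv Ψ) x / deriv Ψ x) * (deriv Ψ x)⁻¹ := by
      field_simp [hg'def]
      simp only [hg'def]; rw [div_mul_cancel₀ _ (pow_ne_zero 2 hne)]
    rw [hid]
    constructor
    · apply mul_le_mul_of_nonneg_right _ (le_of_lt (inv_pos.2 hp))
      have := hub x hx; linarith
    · apply mul_le_mul_of_nonneg_right _ (le_of_lt (inv_pos.2 hp))
      have := hlb x hx; linarith
  have hg'nonneg : ∀ x ∈ Ioi (0:ℝ), 0 ≤ g' x := by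
    intro x hx
    have h1 := (hbound x hx).1
    have h2 : 0 < (deriv Ψ x)⁻¹ := inv_pos.2 (hΨ'pos x hx)
    nlinarith
  intro t ht
  have htpos : (0:ℝ) < t := ht
  -- continuity of g on [0,t]
  have hgcont : ContinuousOn g (Icc 0 t) := by
    intro x hx
    rcases eq_or_lt_of_le hx.1 with h | h
    · subst h
      have hlimg : Tendsto g (nhdsWithin 0 (Ioi 0)) (nhds 0) := by
        have := hlim'.inv_tendsto_atTop
        refine this.congr fun s => ?_
        simp [hgdef, inv_div]
      have hg0 : g 0 = 0 := by simp [hgdef]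
      rw [ContinuousWithinAt, hg0]
      have hmono : nhdsWithin (0:ℝ) (Icc 0 t) ≤ nhdsWithin 0 (Ici 0) :=
        nhdsWithin_mono _ Icc_subset_Ici_self
      refine Tendsto.mono_left ?_ hmono
      have : Ici (0:ℝ) = {0} ∪ Ioi 0 := by
        ext y; simp [le_iff_lt_or_eq, eq_comm, or_comm]
      rw [this, nhdsWithin_union, nhdsWithin_singleton]
      refine Tendsto.sup ?_ hlimg
      simpa [hg0] using tendsto_pure_nhds g 0
    · exact ((hg x h).differentiableAt.continuousAt).continuousWithinAt
  have hgIoo : ∀ x ∈ Ioo (0:ℝ) t, HasDerivAt g (g' x) x := fun x hx => hg x hx.1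
  have hintg' : IntegrableOn g' (Ioc 0 t) :=
    intervalIntegral.integrableOn_deriv_of_nonneg hgcont hgIoo (fun x hx => hg'nonneg x hx.1)
  -- integrability of (Ψ')⁻¹
  have hfcont : ContinuousOn (fun s => (deriv Ψ s)⁻¹) (Ioc 0 t) :=
    (hΨ'cont.mono Ioc_subset_Ioi_self).inv₀ fun x hx =>
      ne_of_gt (hΨ'pos x (Ioc_subset_Ioi_self hx))
  have hfb : ∀ x ∈ Ioc (0:ℝ) t, (deriv Ψ x)⁻¹ ≤ (1 - mt⁻¹)⁻¹ * g' x := by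
    intro x hx
    have h1 := (hbound x hx.1).1
    have hc := mul_inv_cancel₀ (ne_of_gt hcm)
    nlinarith [hg'nonneg x hx.1, inv_pos.2 hcm]
  have hintf : IntegrableOn (fun s => (deriv Ψ s)⁻¹) (Ioc 0 t) := by
    refine Integrable.mono' (hintg'.const_mul (1 - mt⁻¹)⁻¹)
      (hfcont.aestronglyMeasurable measurableSet_Ioc) ?_
    refine (ae_restrict_iff' measurableSet_Ioc).2 (ae_of_all _ fun x hx => ?_)
    rw [Real.norm_eq_abs, abs_of_nonneg (le_of_lt (inv_pos.2 (hΨ'pos x hx.1)))]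
    exact hfb x hx
  -- FTC
  have hIIg' : IntervalIntegrable g' volume 0 t := by
    rw [intervalIntegrable_iff_integrableOn_Ioc_of_le htpos.le]; exact hintg'
  have hFTC : ∫ s in Ioc (0:ℝ) t, g' s = t / deriv Ψ t := by
    have := intervalIntegral.integral_eq_sub_of_hasDeriv_right_of_le htpos.le hgcont
      (fun x hx => (hgIoo x hx).hasDerivWithinAt) hIIg'
    rw [intervalIntegral.integral_of_le htpos.le] at this
    simpa [hgdef] using this
  refine ⟨hintf, ?_, ?_⟩
  · -- lower bound
    have hlow : ∀ x ∈ Ioc (0:ℝ) t, (1 - Mt⁻¹)⁻¹ * g' x ≤ (deriv Ψ x)⁻¹ := by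
      intro x hx
      have h2 := (hbound x hx.1).2
      have hc := mul_inv_cancel₀ (ne_of_gt hcM)
      nlinarith [hg'nonneg x hx.1, inv_pos.2 hcM]
    have := setIntegral_mono_on (hintg'.const_mul (1 - Mt⁻¹)⁻¹) hintf
      measurableSet_Ioc hlow
    rw [integral_const_mul, hFTC] at this
    have heq : (1 - Mt⁻¹)⁻¹ = Mt / (Mt - 1) := by
      rw [eq_div_iff (by intro h; rw [sub_eq_zero] at h; exact absurd h.symm (ne_of_lt hMt1) : Mt - 1 ≠ 0)]
      field_simp
      exact div_self (sub_ne_zero.2 (ne_of_gt hMt1))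
    rw [heq] at this; exact this
  · -- upper bound
    have := setIntegral_mono_on hintf (hintg'.const_mul (1 - mt⁻¹)⁻¹)
      measurableSet_Ioc hfb
    rw [integral_const_mul, hFTC] at this
    have heq : (1 - mt⁻¹)⁻¹ = mt / (mt - 1) := by
      rw [eq_div_iff (by intro h; rw [sub_eq_zero] at h; exact absurd h.symm (ne_of_lt hmtpos) : mt - 1 ≠ 0)]
      field_simp
      exact div_self (sub_ne_zero.2 (ne_of_gt hmtpos))
    rw [heq] at this; exact this
end

section
/- Let Φ(s) = s^r log(s + e) for r ∈ (2,∞). Then Φ is a Young function with inf_{s>0} sΦ'(s)/Φ(s) = r, sup_{s>0} sΦ'(s)/Φ(s) < r + 1, inf_{s>0} sΦ''(s)/Φ'(s) = r − 1, and sup_{s>0} sΦ''(s)/Φ'(s) < r. -/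
open Set Filter

lemma zyg_hasDerivAt1 (r : ℝ) {s : ℝ} (hs : 0 < s) :
    HasDerivAt (fun x : ℝ => x ^ r * Real.log (x + Real.exp 1))
      (r * s ^ (r - 1) * Real.log (s + Real.exp 1) + s ^ r * (s + Real.exp 1)⁻¹) s := by
  have hpos : 0 < s + Real.exp 1 := by positivity
  have h1 : HasDerivAt (fun x : ℝ => x ^ r) (r * s ^ (r - 1)) s :=
    Real.hasDerivAt_rpow_const (Or.inl hs.ne')
  have h2 : HasDerivAt (fun x : ℝ => Real.log (x + Real.exp 1)) ((s + Real.exp 1)⁻¹) s := by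
    simpa [one_div] using ((hasDerivAt_id s).add_const (Real.exp 1)).log hpos.ne'
  exact h1.mul h2

lemma zyg_hasDerivAt2 (r : ℝ) {s : ℝ} (hs : 0 < s) :
    HasDerivAt (fun x : ℝ => r * x ^ (r - 1) * Real.log (x + Real.exp 1) + x ^ r * (x + Real.exp 1)⁻¹)
      (r * ((r - 1) * s ^ (r - 2) * Real.log (s + Real.exp 1) + s ^ (r - 1) * (s + Real.exp 1)⁻¹)
        + (r * s ^ (r - 1) * (s + Real.exp 1)⁻¹ + s ^ r * (-(((s + Real.exp 1) ^ 2)⁻¹)))) s := by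
  have hpos : 0 < s + Real.exp 1 := by positivity
  have hpow1 : HasDerivAt (fun x : ℝ => x ^ (r - 1)) ((r - 1) * s ^ (r - 2)) s := by
    have := Real.hasDerivAt_rpow_const (x := s) (p := r - 1) (Or.inl hs.ne')
    simpa [show r - 1 - 1 = r - 2 by ring] using this
  have hlog : HasDerivAt (fun x : ℝ => Real.log (x + Real.exp 1)) ((s + Real.exp 1)⁻¹) s := by
    simpa [one_div] using ((hasDerivAt_id s).add_const (Real.exp 1)).log hpos.ne'
  have hinv : HasDerivAt (fun x : ℝ => (x + Real.exp 1)⁻¹) (-(((s + Real.exp 1) ^ 2)⁻¹)) s := by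
    have h := ((hasDerivAt_id s).add_const (Real.exp 1)).inv hpos.ne'
    simp only [neg_div, one_div, id] at h
    exact h
  have hA := (hpow1.mul hlog).const_mul r
  have hB := (Real.hasDerivAt_rpow_const (x := s) (p := r) (Or.inl hs.ne')).mul hinv
  have := hA.add hB
  refine HasDerivAt.congr_of_eventuallyEq this ?_
  exact Filter.Eventually.of_forall fun x => by simp only [Pi.add_apply, Pi.mul_apply]; ring

set_option maxHeartbeats 2000000 in
theorem zygmund_young_function
    (r : ℝ) (hr : 2 < r)
    (Φ : ℝ → ℝ)
    (hΦ : ∀ s : ℝ, 0 ≤ s → Φ s = s ^ r * Real.log (s + Real.exp 1)) :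
    -- Φ is a Young function
    (ConvexOn ℝ (Ici 0) Φ ∧ Φ 0 = 0 ∧
      Tendsto (fun s => Φ s / s) (nhdsWithin 0 (Ioi 0)) (nhds 0) ∧
      Tendsto (fun s => Φ s / s) atTop atTop) ∧
    sInf {x : ℝ | ∃ s ∈ Ioi (0:ℝ), x = s * deriv Φ s / Φ s} = r ∧
    (BddAbove {x : ℝ | ∃ s ∈ Ioi (0:ℝ), x = s * deriv Φ s / Φ s} ∧
      sSup {x : ℝ | ∃ s ∈ Ioi (0:ℝ), x = s * deriv Φ s / Φ s} < r + 1) ∧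
    sInf {x : ℝ | ∃ s ∈ Ioi (0:ℝ), x = s * deriv (deriv Φ) s / deriv Φ s} = r - 1 ∧
    (BddAbove {x : ℝ | ∃ s ∈ Ioi (0:ℝ), x = s * deriv (deriv Φ) s / deriv Φ s} ∧
      sSup {x : ℝ | ∃ s ∈ Ioi (0:ℝ), x = s * deriv (deriv Φ) s / deriv Φ s} < r) := by
  have hE : (0:ℝ) < Real.exp 1 := Real.exp_pos 1
  have hpos : ∀ s : ℝ, 0 ≤ s → 0 < s + Real.exp 1 := fun s hs => by linarith
  have hL1 : ∀ s : ℝ, 0 ≤ s → 1 ≤ Real.log (s + Real.exp 1) := by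
    intro s hs
    calc (1:ℝ) = Real.log (Real.exp 1) := (Real.log_exp 1).symm
    _ ≤ Real.log (s + Real.exp 1) := Real.log_le_log hE (by linarith)
  -- log (s+e) ≥ 1 + s/(s+e)
  have hLt : ∀ s : ℝ, 0 < s → 1 + s / (s + Real.exp 1) ≤ Real.log (s + Real.exp 1) := by
    intro s hs
    have hp := hpos s hs.le
    have hx : (0:ℝ) < (s + Real.exp 1) / Real.exp 1 := by positivity
    have h := Real.one_sub_inv_le_log_of_pos hx
    have hlog : Real.log ((s + Real.exp 1) / Real.exp 1) = Real.log (s + Real.exp 1) - 1 := by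
      rw [Real.log_div hp.ne' hE.ne', Real.log_exp]
    have hinv : ((s + Real.exp 1) / Real.exp 1)⁻¹ = Real.exp 1 / (s + Real.exp 1) := inv_div _ _
    have hfr : s / (s + Real.exp 1) = 1 - Real.exp 1 / (s + Real.exp 1) := by
      field_simp
      ring
    rw [hlog, hinv] at h
    linarith [h, hfr]
  -- first derivative off the eventual equality
  have hd1 : ∀ s : ℝ, 0 < s → deriv Φ s
      = r * s ^ (r - 1) * Real.log (s + Real.exp 1) + s ^ r * (s + Real.exp 1)⁻¹ := by
    intro s hs
    have hev : Φ =ᶠ[nhds s] (fun x => x ^ r * Real.log (x + Real.exp 1)) :=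
      eventually_of_mem (Ioi_mem_nhds hs) (fun x hx => hΦ x (le_of_lt hx))
    rw [hev.deriv_eq]
    exact (zyg_hasDerivAt1 r hs).deriv
  have hd2 : ∀ s : ℝ, 0 < s → deriv (deriv Φ) s
      = r * ((r - 1) * s ^ (r - 2) * Real.log (s + Real.exp 1) + s ^ (r - 1) * (s + Real.exp 1)⁻¹)
        + (r * s ^ (r - 1) * (s + Real.exp 1)⁻¹ + s ^ r * (-(((s + Real.exp 1) ^ 2)⁻¹))) := by
    intro s hs
    have hev : deriv Φ =ᶠ[nhds s]
        (fun x => r * x ^ (r - 1) * Real.log (x + Real.exp 1) + x ^ r * (x + Real.exp 1)⁻¹) :=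
      eventually_of_mem (Ioi_mem_nhds hs) (fun x hx => hd1 x hx)
    rw [hev.deriv_eq]
    exact (zyg_hasDerivAt2 r hs).deriv
  -- rpow key identities
  have hkeyA : ∀ s : ℝ, 0 < s → s ^ (r - 1) = s ^ (r - 2) * s := by
    intro s hs; rw [← Real.rpow_add_one hs.ne' (r - 2)]; congr 1; ring
  have hkeyB : ∀ s : ℝ, 0 < s → s ^ r = s ^ (r - 1) * s := by
    intro s hs; rw [← Real.rpow_add_one hs.ne' (r - 1)]; congr 1; ring
  -- cleaned-up derivative formulas
  have hd1' : ∀ s : ℝ, 0 < s → deriv Φ s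
      = s ^ (r - 1) * (r * Real.log (s + Real.exp 1) + s / (s + Real.exp 1)) := by
    intro s hs
    have hp := hpos s hs.le
    rw [hd1 s hs, hkeyB s hs]
    field_simp
  have hd2' : ∀ s : ℝ, 0 < s → deriv (deriv Φ) s
      = s ^ (r - 2) * (r * (r - 1) * Real.log (s + Real.exp 1)
        + 2 * r * (s / (s + Real.exp 1)) - (s / (s + Real.exp 1)) ^ 2) := by
    intro s hs
    have hp := hpos s hs.le
    rw [hd2 s hs, hkeyB s hs, hkeyA s hs]
    field_simp
    ring
  -- ratios
  have hratio1 : ∀ s : ℝ, 0 < s → s * deriv Φ s / Φ s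
      = r + (s / (s + Real.exp 1)) / Real.log (s + Real.exp 1) := by
    intro s hs
    have hp := hpos s hs.le
    have hLpos : 0 < Real.log (s + Real.exp 1) := lt_of_lt_of_le one_pos (hL1 s hs.le)
    have hP : (0:ℝ) < s ^ (r - 1) := Real.rpow_pos_of_pos hs _
    rw [hd1' s hs, hΦ s hs.le, hkeyB s hs]
    field_simp
  have hratio2 : ∀ s : ℝ, 0 < s → s * deriv (deriv Φ) s / deriv Φ s
      = (r - 1) + (s / (s + Real.exp 1)) * (r + 1 - s / (s + Real.exp 1))
          / (r * Real.log (s + Real.exp 1) + s / (s + Real.exp 1)) := by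
    intro s hs
    have hp := hpos s hs.le
    have hLpos : 0 < Real.log (s + Real.exp 1) := lt_of_lt_of_le one_pos (hL1 s hs.le)
    have hP : (0:ℝ) < s ^ (r - 2) := Real.rpow_pos_of_pos hs _
    have ht0 : 0 < s / (s + Real.exp 1) := div_pos hs hp
    have hD : (0:ℝ) < r * Real.log (s + Real.exp 1) + s / (s + Real.exp 1) := by nlinarith
    rw [hd2' s hs, hd1' s hs, hkeyA s hs]
    rw [div_eq_iff (by positivity : (s ^ (r-2) * s * (r * Real.log (s + Real.exp 1) + s / (s + Real.exp 1)) ≠ 0))]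
    field_simp
    ring
  -- continuity on Ici 0
  have hcont : ContinuousOn Φ (Ici 0) := by
    have hc : ContinuousOn (fun x : ℝ => x ^ r * Real.log (x + Real.exp 1)) (Ici 0) := by
      intro x hx
      have hx0 : (0:ℝ) ≤ x := hx
      have h1 : ContinuousAt (fun x : ℝ => x ^ r) x :=
        Real.continuousAt_rpow_const x r (Or.inr (by linarith))
      have h2 : ContinuousAt (fun x : ℝ => Real.log (x + Real.exp 1)) x :=
        ContinuousAt.log (continuousAt_id.add continuousAt_const) (hpos x hx0).ne'
      exact (h1.mul h2).continuousWithinAt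
    exact hc.congr fun x hx => hΦ x hx
  have hconv : ConvexOn ℝ (Ici 0) Φ := by
    apply convexOn_of_deriv2_nonneg (convex_Ici 0) hcont
    · rw [interior_Ici]
      intro x hx
      have hev : Φ =ᶠ[nhds x] (fun y => y ^ r * Real.log (y + Real.exp 1)) :=
        eventually_of_mem (Ioi_mem_nhds hx) fun y hy => hΦ y (le_of_lt hy)
      exact ((zyg_hasDerivAt1 r hx).differentiableAt.congr_of_eventuallyEq
        hev).differentiableWithinAt
    · rw [interior_Ici]
      intro x hx
      have hev : deriv Φ =ᶠ[nhds x] (fun y => r * y ^ (r - 1) * Real.log (y + Real.exp 1)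
          + y ^ r * (y + Real.exp 1)⁻¹) :=
        eventually_of_mem (Ioi_mem_nhds hx) fun y hy => hd1 y hy
      exact ((zyg_hasDerivAt2 r hx).differentiableAt.congr_of_eventuallyEq
        hev).differentiableWithinAt
    · rw [interior_Ici]
      intro x hx
      have h2 : deriv^[2] Φ x = deriv (deriv Φ) x := rfl
      rw [h2, hd2' x hx]
      have hp := hpos x hx.le
      have ht0 : 0 < x / (x + Real.exp 1) := div_pos hx hp
      have ht1 : x / (x + Real.exp 1) < 1 := (div_lt_one hp).2 (by linarith)
      have hL := hL1 x hx.le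
      have hP : (0:ℝ) < x ^ (r - 2) := Real.rpow_pos_of_pos hx _
      apply mul_nonneg hP.le
      have h1 : (x / (x + Real.exp 1)) ^ 2 ≤ 1 := by nlinarith
      have h2 : r * (r - 1) * 1 ≤ r * (r - 1) * Real.log (x + Real.exp 1) :=
        mul_le_mul_of_nonneg_left hL (by nlinarith)
      nlinarith
  have hzero0 : Φ 0 = 0 := by
    rw [hΦ 0 le_rfl, Real.zero_rpow (by linarith : r ≠ 0), zero_mul]
  have htend0 : Tendsto (fun s => Φ s / s) (nhdsWithin 0 (Ioi 0)) (nhds 0) := by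
    have hA : Tendsto (fun s : ℝ => s ^ (r - 1)) (nhds 0) (nhds 0) := by
      have := (Real.continuousAt_rpow_const 0 (r - 1) (Or.inr (by linarith))).tendsto
      simpa [Real.zero_rpow (show r - 1 ≠ 0 by intro h; linarith)] using this
    have hB : Tendsto (fun s : ℝ => Real.log (s + Real.exp 1)) (nhds 0) (nhds 1) := by
      have hc : ContinuousAt (fun s : ℝ => Real.log (s + Real.exp 1)) 0 :=
        ContinuousAt.log (continuousAt_id.add continuousAt_const) (by positivity)
      simpa [Real.log_exp] using hc.tendsto
    have hz : Tendsto (fun s : ℝ => s ^ (r - 1) * Real.log (s + Real.exp 1))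
        (nhdsWithin 0 (Ioi 0)) (nhds 0) := by
      simpa using ((hA.mul hB).mono_left nhdsWithin_le_nhds)
    apply hz.congr'
    filter_upwards [self_mem_nhdsWithin] with s hs
    have hs0 : (0:ℝ) < s := hs
    rw [hΦ s hs0.le, hkeyB s hs0]
    field_simp
  have htendtop : Tendsto (fun s => Φ s / s) atTop atTop := by
    apply tendsto_atTop_mono' atTop ?_ (tendsto_rpow_atTop (show (0:ℝ) < r - 1 by linarith))
    filter_upwards [eventually_gt_atTop 0] with s hs
    have hL := hL1 s hs.le
    have hP : (0:ℝ) < s ^ (r - 1) := Real.rpow_pos_of_pos hs _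
    have heq : Φ s / s = s ^ (r - 1) * Real.log (s + Real.exp 1) := by
      rw [hΦ s hs.le, hkeyB s hs]; field_simp
    rw [heq]
    nlinarith
  -- the four set statements
  have hne1 : {x : ℝ | ∃ s ∈ Ioi (0:ℝ), x = s * deriv Φ s / Φ s}.Nonempty :=
    ⟨1 * deriv Φ 1 / Φ 1, 1, mem_Ioi.2 one_pos, rfl⟩
  have hlb1 : ∀ x ∈ {x : ℝ | ∃ s ∈ Ioi (0:ℝ), x = s * deriv Φ s / Φ s}, r ≤ x := by
    rintro x ⟨s, hs, rfl⟩
    have hs0 : (0:ℝ) < s := hs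
    rw [hratio1 s hs0]
    have hp := hpos s hs0.le
    have hLpos : (0:ℝ) < Real.log (s + Real.exp 1) := lt_of_lt_of_le one_pos (hL1 s hs0.le)
    have : 0 ≤ s / (s + Real.exp 1) / Real.log (s + Real.exp 1) := by positivity
    linarith
  have hub1 : ∀ x ∈ {x : ℝ | ∃ s ∈ Ioi (0:ℝ), x = s * deriv Φ s / Φ s}, x ≤ r + 1/2 := by
    rintro x ⟨s, hs, rfl⟩
    have hs0 : (0:ℝ) < s := hs
    rw [hratio1 s hs0]
    have hp := hpos s hs0.le
    have hLpos : (0:ℝ) < Real.log (s + Real.exp 1) := lt_of_lt_of_le one_pos (hL1 s hs0.le)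
    have ht1 : s / (s + Real.exp 1) < 1 := (div_lt_one hp).2 (by linarith)
    have key : s / (s + Real.exp 1) / Real.log (s + Real.exp 1) ≤ 1/2 := by
      rw [div_le_iff₀ hLpos]
      nlinarith [hLt s hs0]
    linarith
  have hinf1 : sInf {x : ℝ | ∃ s ∈ Ioi (0:ℝ), x = s * deriv Φ s / Φ s} = r := by
    apply le_antisymm
    · rw [Real.sInf_le_iff ⟨r, hlb1⟩ hne1]
      intro ε hε
      set s₀ : ℝ := ε * Real.exp 1 / 2 with hs₀def
      have hs₀ : 0 < s₀ := by positivity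
      refine ⟨s₀ * deriv Φ s₀ / Φ s₀, ⟨s₀, hs₀, rfl⟩, ?_⟩
      rw [hratio1 s₀ hs₀]
      have hp := hpos s₀ hs₀.le
      have hL := hL1 s₀ hs₀.le
      have h1 : s₀ / (s₀ + Real.exp 1) / Real.log (s₀ + Real.exp 1) ≤ s₀ / (s₀ + Real.exp 1) :=
        div_le_self (by positivity) hL
      have h2 : s₀ / (s₀ + Real.exp 1) ≤ s₀ / Real.exp 1 := by
        gcongr <;> linarith
      have h3 : s₀ / Real.exp 1 = ε / 2 := by
        rw [hs₀def]; field_simp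
      linarith
    · exact le_csInf hne1 hlb1
  have hsup1 : BddAbove {x : ℝ | ∃ s ∈ Ioi (0:ℝ), x = s * deriv Φ s / Φ s} ∧
      sSup {x : ℝ | ∃ s ∈ Ioi (0:ℝ), x = s * deriv Φ s / Φ s} < r + 1 :=
    ⟨⟨r + 1/2, hub1⟩, lt_of_le_of_lt (csSup_le hne1 hub1) (by linarith)⟩
  have hne2 : {x : ℝ | ∃ s ∈ Ioi (0:ℝ), x = s * deriv (deriv Φ) s / deriv Φ s}.Nonempty :=
    ⟨1 * deriv (deriv Φ) 1 / deriv Φ 1, 1, mem_Ioi.2 one_pos, rfl⟩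
  have hlb2 : ∀ x ∈ {x : ℝ | ∃ s ∈ Ioi (0:ℝ), x = s * deriv (deriv Φ) s / deriv Φ s},
      r - 1 ≤ x := by
    rintro x ⟨s, hs, rfl⟩
    have hs0 : (0:ℝ) < s := hs
    rw [hratio2 s hs0]
    have hp := hpos s hs0.le
    have hL := hL1 s hs0.le
    have ht0 : 0 < s / (s + Real.exp 1) := div_pos hs0 hp
    have ht1 : s / (s + Real.exp 1) < 1 := (div_lt_one hp).2 (by linarith)
    have hD : (0:ℝ) < r * Real.log (s + Real.exp 1) + s / (s + Real.exp 1) := by nlinarith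
    have : 0 ≤ s / (s + Real.exp 1) * (r + 1 - s / (s + Real.exp 1))
        / (r * Real.log (s + Real.exp 1) + s / (s + Real.exp 1)) :=
      div_nonneg (mul_nonneg ht0.le (by linarith)) hD.le
    linarith
  have hub2 : ∀ x ∈ {x : ℝ | ∃ s ∈ Ioi (0:ℝ), x = s * deriv (deriv Φ) s / deriv Φ s},
      x ≤ r - 1 + (r + 1) / (2 * r + 1) := by
    rintro x ⟨s, hs, rfl⟩
    have hs0 : (0:ℝ) < s := hs
    rw [hratio2 s hs0]
    have hp := hpos s hs0.le
    have hL := hL1 s hs0.le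
    have hLt' := hLt s hs0
    have ht0 : 0 < s / (s + Real.exp 1) := div_pos hs0 hp
    have ht1 : s / (s + Real.exp 1) < 1 := (div_lt_one hp).2 (by linarith)
    have hD : (0:ℝ) < r * Real.log (s + Real.exp 1) + s / (s + Real.exp 1) := by nlinarith
    have hq : s / (s + Real.exp 1) * (r + 1 - s / (s + Real.exp 1))
        / (r * Real.log (s + Real.exp 1) + s / (s + Real.exp 1)) ≤ (r + 1) / (2 * r + 1) := by
      rw [div_le_div_iff₀ hD (by linarith)]
      nlinarith [mul_nonneg (mul_nonneg (by linarith : (0:ℝ) ≤ r)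
          (by linarith : (0:ℝ) ≤ r + 1)) (by linarith : (0:ℝ) ≤ 1 - s / (s + Real.exp 1)),
        mul_nonneg (by linarith : (0:ℝ) ≤ 2 * r + 1) (sq_nonneg (s / (s + Real.exp 1))),
        mul_nonneg (mul_nonneg (by linarith : (0:ℝ) ≤ r) (by linarith : (0:ℝ) ≤ r + 1))
          (by linarith : (0:ℝ) ≤ Real.log (s + Real.exp 1) - (1 + s / (s + Real.exp 1)))]
    linarith
  have hinf2 : sInf {x : ℝ | ∃ s ∈ Ioi (0:ℝ), x = s * deriv (deriv Φ) s / deriv Φ s} = r - 1 := by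
    apply le_antisymm
    · rw [Real.sInf_le_iff ⟨r - 1, hlb2⟩ hne2]
      intro ε hε
      set s₀ : ℝ := ε * Real.exp 1 * r / (2 * (r + 1)) with hs₀def
      have hs₀ : 0 < s₀ := by
        rw [hs₀def]
        positivity
      refine ⟨s₀ * deriv (deriv Φ) s₀ / deriv Φ s₀, ⟨s₀, hs₀, rfl⟩, ?_⟩
      rw [hratio2 s₀ hs₀]
      have hp := hpos s₀ hs₀.le
      have hL := hL1 s₀ hs₀.le
      have ht0 : 0 < s₀ / (s₀ + Real.exp 1) := div_pos hs₀ hp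
      have ht1 : s₀ / (s₀ + Real.exp 1) < 1 := (div_lt_one hp).2 (by linarith)
      have hq1 : s₀ / (s₀ + Real.exp 1) * (r + 1 - s₀ / (s₀ + Real.exp 1))
          / (r * Real.log (s₀ + Real.exp 1) + s₀ / (s₀ + Real.exp 1))
          ≤ s₀ / (s₀ + Real.exp 1) * (r + 1) / r := by
        apply div_le_div₀ (by positivity) ?_ (by linarith) ?_
        · nlinarith [mul_pos ht0 ht0]
        · nlinarith [mul_le_mul_of_nonneg_left hL (by linarith : (0:ℝ) ≤ r), ht0]
      have hq2 : s₀ / (s₀ + Real.exp 1) ≤ s₀ / Real.exp 1 := by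
        gcongr <;> linarith
      have hq3 : s₀ / (s₀ + Real.exp 1) * (r + 1) / r ≤ ε / 2 := by
        rw [div_le_iff₀ (by linarith : (0:ℝ) < r)]
        have ha : s₀ / (s₀ + Real.exp 1) * (r + 1) ≤ s₀ / Real.exp 1 * (r + 1) :=
          mul_le_mul_of_nonneg_right hq2 (by linarith)
        have hb : s₀ / Real.exp 1 * (r + 1) = ε / 2 * r := by
          rw [hs₀def]; field_simp
        linarith
      linarith
    · exact le_csInf hne2 hlb2
  have hfrac : (r + 1) / (2 * r + 1) < 1 := (div_lt_one (by linarith)).2 (by linarith)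
  have hsup2 : BddAbove {x : ℝ | ∃ s ∈ Ioi (0:ℝ), x = s * deriv (deriv Φ) s / deriv Φ s} ∧
      sSup {x : ℝ | ∃ s ∈ Ioi (0:ℝ), x = s * deriv (deriv Φ) s / deriv Φ s} < r :=
    ⟨⟨r - 1 + (r + 1) / (2 * r + 1), hub2⟩,
      lt_of_le_of_lt (csSup_le hne2 hub2) (by linarith)⟩
  exact ⟨⟨hconv, hzero0, htend0, htendtop⟩, hinf1, hsup1, hinf2, hsup2⟩
end

section
/- Let Φ, Ψ be mutually complementary Young functions satisfying: C¹ on [0,∞), C² on (0,∞), Φ'',Ψ''>0 on (0,∞), Φ' strictly convex with Φ'(s)/s→0 at 0+, M := sup sΦ'(s)/Φ(s) < ∞, and 1 < m̃ := inf sΦ''(s)/Φ'(s) ≤ M̃ := sup sΦ''(s)/Φ'(s) < ∞. Fix δ ∈ (0, (m̃−1)/(100 m̃)]. Define 𝔛: ℂ² → [0,∞) by 𝔛(u,v) = (1+δ)(Φ(|u|)+Ψ(|v|)) + δ|u|²∫_0^{|u|} Φ'(s)/s² ds when |v| ≤ Φ'(|u|), and 𝔛(u,v) = Φ(|u|)+Ψ(|v|)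 + δ|u|²∫_0^{|v|} ds/Ψ'(s) when |v| > Φ'(|u|). Then 𝔛(u,v) ≤ 2·max{1, M/m̃}·(Φ(|u|) + Ψ(|v|)) for all (u,v) ∈ ℂ². -/
open Set Filter MeasureTheory

lemma aux_integral (F F' g : ℝ → ℝ) (u B : ℝ) (hu : 0 < u) (hB : 0 ≤ B)
    (hgc : ContinuousOn g (Ioi 0))
    (hF : ∀ s ∈ Ioi (0:ℝ), HasDerivAt F (F' s) s)
    (hF'c : ContinuousOn F' (Ioi 0))
    (hle : ∀ s ∈ Ioi (0:ℝ), g s ≤ F' s)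
    (hFB : ∀ ε ∈ Ioc (0:ℝ) u, F u - F ε ≤ B) :
    ∫ s in Ioc (0:ℝ) u, g s ≤ B := by
  have hpart : ∀ ε ∈ Ioc (0:ℝ) u, ∫ s in Ioc ε u, g s ≤ B := by
    intro ε hε
    obtain ⟨hε0, hεu⟩ := hε
    have hIcc : Icc ε u ⊆ Ioi (0:ℝ) := fun x hx => lt_of_lt_of_le hε0 hx.1
    have huIcc : uIcc ε u = Icc ε u := uIcc_of_le hεu
    have hgi : IntervalIntegrable g volume ε u :=
      ((hgc.mono hIcc).mono (by rw [huIcc])).intervalIntegrable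
    have hFi : IntervalIntegrable F' volume ε u :=
      ((hF'c.mono hIcc).mono (by rw [huIcc])).intervalIntegrable
    have h1 : ∫ s in Ioc ε u, g s = ∫ s in ε..u, g s :=
      (intervalIntegral.integral_of_le hεu).symm
    have h2 : ∫ s in ε..u, g s ≤ ∫ s in ε..u, F' s :=
      intervalIntegral.integral_mono_on hεu hgi hFi (fun x hx => hle x (hIcc hx))
    have h3 : ∫ s in ε..u, F' s = F u - F ε := by
      apply intervalIntegral.integral_eq_sub_of_hasDerivAt
      · intro x hx
        rw [huIcc] at hx
        exact hF x (hIcc hx)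
      · exact hFi
    rw [h1]
    calc ∫ s in ε..u, g s ≤ F u - F ε := by rw [← h3]; exact h2
      _ ≤ B := hFB ε ⟨hε0, hεu⟩
  by_cases hint : IntegrableOn g (Ioc 0 u) volume
  · set A : ℕ → Set ℝ := fun n => Ioc (u / (n + 2)) u with hA
    have hmono : Monotone A := by
      intro a b hab
      apply Ioc_subset_Ioc_left
      have hc : (a:ℝ) + 2 ≤ (b:ℝ) + 2 := by
        have := (Nat.cast_le (α := ℝ)).mpr hab
        linarith
      gcongr
    have hunion : ⋃ n, A n = Ioc 0 u := by
      ext x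
      simp only [mem_iUnion, hA, mem_Ioc]
      constructor
      · rintro ⟨n, h1, h2⟩
        exact ⟨lt_trans (by positivity) h1, h2⟩
      · rintro ⟨hx0, hxu⟩
        obtain ⟨n, hn⟩ := exists_nat_gt (u / x)
        refine ⟨n, ?_, hxu⟩
        rw [div_lt_iff₀ (by positivity)]
        have : u / x < n + 2 := by linarith
        calc u = (u / x) * x := by field_simp
          _ < (n + 2) * x := by
              apply mul_lt_mul_of_pos_right this hx0
          _ = x * (n + 2) := by ring
    have htend := MeasureTheory.tendsto_setIntegral_of_monotone
      (fun n => measurableSet_Ioc) hmono (hunion ▸ hint)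
    rw [hunion] at htend
    refine le_of_tendsto htend (Eventually.of_forall fun n => ?_)
    apply hpart
    constructor
    · positivity
    · rw [div_le_iff₀ (by positivity)]
      nlinarith [hu.le]
  · rw [MeasureTheory.integral_undef]
    · exact hB
    · exact hint

set_option maxHeartbeats 2000000 in
theorem bellman_upper_bound
    (Φ Ψ : ℝ → ℝ) (M mt Mt δ : ℝ)
    (hconvΦ : ConvexOn ℝ (Ici 0) Φ) (h0Φ : Φ 0 = 0)
    (hlim0Φ : Tendsto (fun s => Φ s / s) (nhdsWithin 0 (Ioi 0)) (nhds 0))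
    (hlimtopΦ : Tendsto (fun s => Φ s / s) atTop atTop)
    (hcompl : ∀ t : ℝ, 0 ≤ t → Ψ t = sSup ((fun s => s * t - Φ s) '' Ioi 0))
    (hC1Φ : ContDiffOn ℝ 1 Φ (Ici 0)) (hC2Φ : ContDiffOn ℝ 2 Φ (Ioi 0))
    (hC1Ψ : ContDiffOn ℝ 1 Ψ (Ici 0)) (hC2Ψ : ContDiffOn ℝ 2 Ψ (Ioi 0))
    (hΦ'' : ∀ s ∈ Ioi (0:ℝ), 0 < deriv (deriv Φ) s)
    (hΨ'' : ∀ s ∈ Ioi (0:ℝ), 0 < deriv (deriv Ψ) s)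
    (hconv' : StrictConvexOn ℝ (Ioi 0) (deriv Φ))
    (hlim' : Tendsto (fun s => deriv Φ s / s) (nhdsWithin 0 (Ioi 0)) (nhds 0))
    (hM : M = sSup {x : ℝ | ∃ s ∈ Ioi (0:ℝ), x = s * deriv Φ s / Φ s})
    (hMbdd : BddAbove {x : ℝ | ∃ s ∈ Ioi (0:ℝ), x = s * deriv Φ s / Φ s})
    (hmt : mt = sInf {x : ℝ | ∃ s ∈ Ioi (0:ℝ), x = s * deriv (deriv Φ) s / deriv Φ s})
    (hMt : Mt = sSup {x : ℝ | ∃ s ∈ Ioi (0:ℝ), x = s * deriv (deriv Φ) s / deriv Φ s})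
    (hMtbdd : BddAbove {x : ℝ | ∃ s ∈ Ioi (0:ℝ), x = s * deriv (deriv Φ) s / deriv Φ s})
    (hmt1 : 1 < mt)
    (hδ0 : 0 < δ) (hδ : δ ≤ (mt - 1) / (100 * mt))
    (X : ℂ → ℂ → ℝ)
    (hXlow : ∀ u v : ℂ, ‖v‖ ≤ deriv Φ (‖u‖) →
      X u v = (1 + δ) * (Φ (‖u‖) + Ψ (‖v‖))
        + δ * (‖u‖) ^ 2 * ∫ s in Ioc (0:ℝ) (‖u‖), deriv Φ s / s ^ 2)
    (hXup : ∀ u v : ℂ, deriv Φ (‖u‖) < ‖v‖ →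
      X u v = Φ (‖u‖) + Ψ (‖v‖)
        + δ * (‖u‖) ^ 2 * ∫ s in Ioc (0:ℝ) (‖v‖), (deriv Ψ s)⁻¹) :
    ∀ u v : ℂ,
      X u v ≤ 2 * max 1 (M / mt) * (Φ (‖u‖) + Ψ (‖v‖)) := by
  have hmt0 : (0:ℝ) < mt := lt_trans one_pos hmt1
  have hmtm1 : (0:ℝ) < mt - 1 := by linarith
  have hδsmall : δ ≤ 1/100 := by
    have h1 : (mt - 1)/(100*mt) ≤ 1/100 := by
      rw [div_le_div_iff₀ (by positivity) (by norm_num)]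
      nlinarith
    linarith
  have hIoiIci : Ioi (0:ℝ) ⊆ Ici 0 := Ioi_subset_Ici_self
  -- derivative facts
  have hΦd : ∀ s ∈ Ioi (0:ℝ), HasDerivAt Φ (deriv Φ s) s := by
    intro s hs
    have hnh : Ici (0:ℝ) ∈ nhds s := mem_of_superset (isOpen_Ioi.mem_nhds hs) hIoiIci
    exact ((hC1Φ.differentiableOn (by norm_num)).differentiableAt hnh).hasDerivAt
  have hΦ'C1 : ContDiffOn ℝ 1 (deriv Φ) (Ioi 0) :=
    hC2Φ.deriv_of_isOpen (m := 1) isOpen_Ioi (by norm_num)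
  have hΦ'd : ∀ s ∈ Ioi (0:ℝ), HasDerivAt (deriv Φ) (deriv (deriv Φ) s) s := fun s hs =>
    ((hΦ'C1.differentiableOn (by norm_num)).differentiableAt (isOpen_Ioi.mem_nhds hs)).hasDerivAt
  have hΦ'c : ContinuousOn (deriv Φ) (Ioi 0) := hΦ'C1.continuousOn
  have hΦ''c : ContinuousOn (deriv (deriv Φ)) (Ioi 0) :=
    (hΦ'C1.deriv_of_isOpen (m := 0) isOpen_Ioi (by norm_num)).continuousOn
  have hΨd : ∀ s ∈ Ioi (0:ℝ), HasDerivAt Ψ (deriv Ψ s) s := by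
    intro s hs
    have hnh : Ici (0:ℝ) ∈ nhds s := mem_of_superset (isOpen_Ioi.mem_nhds hs) hIoiIci
    exact ((hC1Ψ.differentiableOn (by norm_num)).differentiableAt hnh).hasDerivAt
  have hΨ'C1 : ContDiffOn ℝ 1 (deriv Ψ) (Ioi 0) :=
    hC2Ψ.deriv_of_isOpen (m := 1) isOpen_Ioi (by norm_num)
  have hΨ'd : ∀ s ∈ Ioi (0:ℝ), HasDerivAt (deriv Ψ) (deriv (deriv Ψ) s) s := fun s hs =>
    ((hΨ'C1.differentiableOn (by norm_num)).differentiableAt (isOpen_Ioi.mem_nhds hs)).hasDerivAt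
  have hΨ'c : ContinuousOn (deriv Ψ) (Ioi 0) := hΨ'C1.continuousOn
  have hΨ''c : ContinuousOn (deriv (deriv Ψ)) (Ioi 0) :=
    (hΨ'C1.deriv_of_isOpen (m := 0) isOpen_Ioi (by norm_num)).continuousOn
  -- limits at 0+
  have hid0 : Tendsto (fun s : ℝ => s) (nhdsWithin 0 (Ioi 0)) (nhds 0) :=
    tendsto_id.mono_right nhdsWithin_le_nhds
  have hφ0 : Tendsto (deriv Φ) (nhdsWithin 0 (Ioi 0)) (nhds 0) := by
    have h1 : Tendsto (fun s : ℝ => s * (deriv Φ s / s)) (nhdsWithin 0 (Ioi 0)) (nhds 0) := by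
      simpa using hid0.mul hlim'
    refine Tendsto.congr' ?_ h1
    filter_upwards [self_mem_nhdsWithin] with s hs
    have : (s:ℝ) ≠ 0 := ne_of_gt hs
    field_simp
  have hΦ0 : Tendsto Φ (nhdsWithin 0 (Ioi 0)) (nhds 0) := by
    have h1 : Tendsto (fun s : ℝ => s * (Φ s / s)) (nhdsWithin 0 (Ioi 0)) (nhds 0) := by
      simpa using hid0.mul hlim0Φ
    refine Tendsto.congr' ?_ h1
    filter_upwards [self_mem_nhdsWithin] with s hs
    have : (s:ℝ) ≠ 0 := ne_of_gt hs
    field_simp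
  -- monotonicity and positivity
  have hφmono : StrictMonoOn (deriv Φ) (Ioi 0) :=
    strictMonoOn_of_deriv_pos (convex_Ioi 0) hΦ'c (by rw [interior_Ioi]; exact hΦ'')
  have hφpos : ∀ s ∈ Ioi (0:ℝ), 0 < deriv Φ s := by
    intro s hs
    have hs' : (0:ℝ) < s := hs
    have hs2 : s/2 ∈ Ioi (0:ℝ) := by simp only [mem_Ioi]; linarith
    have hnn : 0 ≤ deriv Φ (s/2) := by
      refine le_of_tendsto hφ0 ?_
      filter_upwards [Ioo_mem_nhdsGT_of_mem (⟨le_refl (0:ℝ), by linarith⟩ : (0:ℝ) ∈ Ico 0 (s/2))] with t ht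
      exact (hφmono ht.1 hs2 ht.2).le
    exact lt_of_le_of_lt hnn (hφmono hs2 hs (by linarith))
  have hΦc : ContinuousOn Φ (Ici 0) := hC1Φ.continuousOn
  have hΦmono : StrictMonoOn Φ (Ioi 0) :=
    strictMonoOn_of_deriv_pos (convex_Ioi 0) (hΦc.mono hIoiIci) (by rw [interior_Ioi]; exact hφpos)
  have hΦpos : ∀ s ∈ Ioi (0:ℝ), 0 < Φ s := by
    intro s hs
    have hs' : (0:ℝ) < s := hs
    have hs2 : s/2 ∈ Ioi (0:ℝ) := by simp only [mem_Ioi]; linarith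
    have hnn : 0 ≤ Φ (s/2) := by
      refine le_of_tendsto hΦ0 ?_
      filter_upwards [Ioo_mem_nhdsGT_of_mem (⟨le_refl (0:ℝ), by linarith⟩ : (0:ℝ) ∈ Ico 0 (s/2))] with t ht
      exact (hΦmono ht.1 hs2 ht.2).le
    exact lt_of_le_of_lt hnn (hΦmono hs2 hs (by linarith))
  have hΦnonneg : ∀ s : ℝ, 0 ≤ s → 0 ≤ Φ s := by
    intro s hs
    rcases eq_or_lt_of_le hs with h | h
    · rw [← h, h0Φ]
    · exact (hΦpos s h).le
  -- M and mt facts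
  have hMfact : ∀ s ∈ Ioi (0:ℝ), s * deriv Φ s ≤ M * Φ s := by
    intro s hs
    have h1 : s * deriv Φ s / Φ s ≤ M := hM ▸ le_csSup hMbdd ⟨s, hs, rfl⟩
    have h2 : 0 < Φ s := hΦpos s hs
    calc s * deriv Φ s = (s * deriv Φ s / Φ s) * Φ s := by field_simp
      _ ≤ M * Φ s := mul_le_mul_of_nonneg_right h1 h2.le
  have hMpos : 0 < M := by
    have h1 : 1 * deriv Φ 1 / Φ 1 ≤ M := hM ▸ le_csSup hMbdd ⟨1, by norm_num, rfl⟩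
    have h2 := hφpos 1 (by norm_num)
    have h3 := hΦpos 1 (by norm_num)
    have : 0 < 1 * deriv Φ 1 / Φ 1 := by positivity
    linarith
  have hmtfact : ∀ s ∈ Ioi (0:ℝ), mt * deriv Φ s ≤ s * deriv (deriv Φ) s := by
    intro s hs
    have hbdd : BddBelow {x : ℝ | ∃ s ∈ Ioi (0:ℝ), x = s * deriv (deriv Φ) s / deriv Φ s} := by
      refine ⟨0, ?_⟩
      rintro x ⟨a, ha, rfl⟩
      have h1 := hφpos a ha
      have h2 := hΦ'' a ha
      have h3 : (0:ℝ) < a := ha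
      positivity
    have h1 : mt ≤ s * deriv (deriv Φ) s / deriv Φ s := hmt ▸ csInf_le hbdd ⟨s, hs, rfl⟩
    have h2 := hφpos s hs
    calc mt * deriv Φ s ≤ (s * deriv (deriv Φ) s / deriv Φ s) * deriv Φ s :=
          mul_le_mul_of_nonneg_right h1 h2.le
      _ = s * deriv (deriv Φ) s := by field_simp
  -- slope fact: Φ T ≤ T Φ'(T)
  have hslope : ∀ T ∈ Ioi (0:ℝ), Φ T ≤ T * deriv Φ T := by
    intro T hT
    have hT' : (0:ℝ) < T := hT
    have key : ∀ ε ∈ Ioo (0:ℝ) T, Φ T - Φ ε ≤ T * deriv Φ T := by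
      intro ε hε
      obtain ⟨c, hc, hceq⟩ := exists_hasDerivAt_eq_slope Φ (deriv Φ) hε.2
        ((hΦc.mono hIoiIci).mono (fun x hx => lt_of_lt_of_le hε.1 hx.1))
        (fun x hx => hΦd x (lt_trans hε.1 hx.1))
      have hc0 : c ∈ Ioi (0:ℝ) := lt_trans hε.1 hc.1
      have h1 : Φ T - Φ ε = deriv Φ c * (T - ε) := by
        rw [hceq, div_mul_cancel₀ _ (by linarith [hε.2] : (T:ℝ) - ε ≠ 0)]
      have h2 : deriv Φ c ≤ deriv Φ T := (hφmono.le_iff_le hc0 hT).mpr hc.2.le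
      have h3 := hφpos c hc0
      have h4 := hφpos T hT
      nlinarith [hε.1, hε.2]
    have h3 : Tendsto (fun ε => Φ T - Φ ε) (nhdsWithin 0 (Ioi 0)) (nhds (Φ T)) := by
      simpa using (tendsto_const_nhds (x := Φ T) (f := nhdsWithin (0:ℝ) (Ioi 0))).sub hΦ0
    refine le_of_tendsto h3 ?_
    filter_upwards [Ioo_mem_nhdsGT_of_mem (⟨le_refl (0:ℝ), hT'⟩ : (0:ℝ) ∈ Ico 0 T)] with ε hε
    exact key ε hε
  -- surjectivity of Φ' onto (0,∞)
  have hsurj : ∀ t ∈ Ioi (0:ℝ), ∃ s ∈ Ioi (0:ℝ), deriv Φ s = t := by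
    intro t ht
    have ht' : (0:ℝ) < t := ht
    have h1 : ∀ᶠ x in nhdsWithin (0:ℝ) (Ioi 0), deriv Φ x < t ∧ x ∈ Ioi (0:ℝ) :=
      (hφ0.eventually_lt_const ht').and eventually_mem_nhdsWithin
    obtain ⟨ε, hεlt, hε0⟩ := h1.exists
    obtain ⟨T, hT1, hT2⟩ := ((hlimtopΦ.eventually_ge_atTop (t+1)).and
      (eventually_ge_atTop (ε+1))).exists
    have hT0 : (0:ℝ) < T := by
      have : (0:ℝ) < ε := hε0
      linarith
    have hφT : t ≤ deriv Φ T := by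
      have h2 := hslope T hT0
      have h3 : (t+1) * T ≤ Φ T := by
        rw [le_div_iff₀ hT0] at hT1
        linarith
      nlinarith
    have hεT : ε ≤ T := by
      have : (0:ℝ) < ε := hε0
      linarith
    have hIcc : Icc ε T ⊆ Ioi (0:ℝ) := fun x hx => lt_of_lt_of_le hε0 hx.1
    have := intermediate_value_Icc hεT (hΦ'c.mono hIcc)
    obtain ⟨s, hsmem, hseq⟩ := this ⟨hεlt.le, hφT⟩
    exact ⟨s, lt_of_lt_of_le hε0 hsmem.1, hseq⟩
  -- tangent line inequality
  have htan : ∀ a ∈ Ioi (0:ℝ), ∀ b ∈ Ioi (0:ℝ), Φ a + deriv Φ a * (b - a) ≤ Φ b := by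
    intro a ha b hb
    have ha' : (0:ℝ) < a := ha
    have hb' : (0:ℝ) < b := hb
    rcases lt_trichotomy a b with h | h | h
    · obtain ⟨c, hc, hceq⟩ := exists_hasDerivAt_eq_slope Φ (deriv Φ) h
        ((hΦc.mono hIoiIci).mono (fun x hx => lt_of_lt_of_le ha' hx.1))
        (fun x hx => hΦd x (lt_trans ha' hx.1))
      have hc0 : c ∈ Ioi (0:ℝ) := lt_trans ha' hc.1
      have h1 : Φ b - Φ a = deriv Φ c * (b - a) := by
        rw [hceq, div_mul_cancel₀ _ (by linarith : (b:ℝ) - a ≠ 0)]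
      have h2 : deriv Φ a ≤ deriv Φ c := (hφmono.le_iff_le ha hc0).mpr hc.1.le
      nlinarith
    · rw [h]; simp
    · obtain ⟨c, hc, hceq⟩ := exists_hasDerivAt_eq_slope Φ (deriv Φ) h
        ((hΦc.mono hIoiIci).mono (fun x hx => lt_of_lt_of_le hb' hx.1))
        (fun x hx => hΦd x (lt_trans hb' hx.1))
      have hc0 : c ∈ Ioi (0:ℝ) := lt_trans hb' hc.1
      have h1 : Φ a - Φ b = deriv Φ c * (a - b) := by
        rw [hceq, div_mul_cancel₀ _ (by linarith : (a:ℝ) - b ≠ 0)]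
      have h2 : deriv Φ c ≤ deriv Φ a := (hφmono.le_iff_le hc0 ha).mpr hc.2.le
      nlinarith
  -- Legendre transform facts
  have hBdd : ∀ t ∈ Ioi (0:ℝ), ∀ s0 ∈ Ioi (0:ℝ), deriv Φ s0 = t →
      ∀ x ∈ (fun s => s * t - Φ s) '' Ioi 0, x ≤ s0 * t - Φ s0 := by
    rintro t ht s0 hs0 hst x ⟨a, ha, rfl⟩
    have h1 := htan s0 hs0 a ha
    rw [hst] at h1
    simp only
    linarith
  have hΨeq : ∀ t ∈ Ioi (0:ℝ), ∀ s0 ∈ Ioi (0:ℝ), deriv Φ s0 = t → Ψ t = s0 * t - Φ s0 := by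
    intro t ht s0 hs0 hst
    have ht' : (0:ℝ) < t := ht
    rw [hcompl t ht'.le]
    apply le_antisymm
    · exact csSup_le ⟨s0 * t - Φ s0, ⟨s0, hs0, rfl⟩⟩ (hBdd t ht s0 hs0 hst)
    · exact le_csSup ⟨s0 * t - Φ s0, hBdd t ht s0 hs0 hst⟩ ⟨s0, hs0, rfl⟩
  have hΨ0 : Ψ 0 = 0 := by
    rw [hcompl 0 le_rfl]
    have hub : ∀ x ∈ (fun s => s * (0:ℝ) - Φ s) '' Ioi 0, x ≤ 0 := by
      rintro x ⟨a, ha, rfl⟩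
      simp only [mul_zero, zero_sub, neg_nonpos]
      exact hΦnonneg a (le_of_lt ha)
    apply le_antisymm
    · exact csSup_le ⟨1 * 0 - Φ 1, ⟨1, by norm_num, rfl⟩⟩ hub
    · have hbd : BddAbove ((fun s => s * (0:ℝ) - Φ s) '' Ioi 0) := ⟨0, hub⟩
      have key : ∀ ε ∈ Ioi (0:ℝ), -Φ ε ≤ sSup ((fun s => s * (0:ℝ) - Φ s) '' Ioi 0) := by
        intro ε hε
        have := le_csSup hbd ⟨ε, hε, rfl⟩
        simpa using this
      refine le_of_tendsto (f := fun ε => -Φ ε) (by simpa using hΦ0.neg) ?_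
      filter_upwards [eventually_mem_nhdsWithin] with ε hε
      exact key ε hε
  have hΨnonneg : ∀ t : ℝ, 0 ≤ t → 0 ≤ Ψ t := by
    intro t ht
    rcases eq_or_lt_of_le ht with h | h
    · rw [← h, hΨ0]
    · obtain ⟨s0, hs0, hst⟩ := hsurj t h
      rw [hΨeq t h s0 hs0 hst]
      have h1 := hslope s0 hs0
      rw [hst] at h1
      linarith
  have hYoung : ∀ a b : ℝ, 0 ≤ a → 0 ≤ b → a * b ≤ Φ a + Ψ b := by
    intro a b ha hb
    rcases eq_or_lt_of_le ha with h | ha'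
    · rw [← h, h0Φ]
      simpa using hΨnonneg b hb
    rcases eq_or_lt_of_le hb with h | hb'
    · rw [← h, hΨ0]
      simpa using hΦnonneg a ha
    obtain ⟨s0, hs0, hst⟩ := hsurj b hb'
    have hbdd : BddAbove ((fun s => s * b - Φ s) '' Ioi 0) :=
      ⟨s0 * b - Φ s0, hBdd b hb' s0 hs0 hst⟩
    have h2 : a * b - Φ a ≤ Ψ b := by
      rw [hcompl b hb'.le]
      exact le_csSup hbdd ⟨a, ha', rfl⟩
    linarith
  -- derivative of Ψ is the inverse of Φ'
  have hψeq : ∀ t ∈ Ioi (0:ℝ), deriv Ψ t ∈ Ioi (0:ℝ) ∧ deriv Φ (deriv Ψ t) = t := by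
    intro t ht
    obtain ⟨s0, hs0, hst⟩ := hsurj t ht
    suffices h : deriv Ψ t = s0 by rw [h]; exact ⟨hs0, hst⟩
    have hg : ∀ t' ∈ Ici (0:ℝ), Ψ t - (s0 * t - Φ s0) ≤ Ψ t' - (s0 * t' - Φ s0) := by
      intro t' ht'
      have h1 : Ψ t = s0 * t - Φ s0 := hΨeq t ht s0 hs0 hst
      have h2 : s0 * t' - Φ s0 ≤ Ψ t' := by
        rcases eq_or_lt_of_le (mem_Ici.mp ht') with h | h
        · rw [← h, hΨ0]
          have := hΦnonneg s0 (le_of_lt hs0)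
          simp only [mul_zero, zero_sub]
          linarith
        · obtain ⟨s1, hs1, hst1⟩ := hsurj t' h
          have h3 := hΨeq t' h s1 hs1 hst1
          have h4 := hBdd t' h s1 hs1 hst1 (s0 * t' - Φ s0) ⟨s0, hs0, rfl⟩
          linarith
      linarith
    have hloc : IsLocalMin (fun t' => Ψ t' - (s0 * t' - Φ s0)) t := by
      unfold IsLocalMin IsMinFilter
      filter_upwards [isOpen_Ioi.mem_nhds ht] with x hx
      exact hg x (hIoiIci hx)
    have hder : HasDerivAt (fun t' => Ψ t' - (s0 * t' - Φ s0)) (deriv Ψ t - s0) t := by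
      have h1 := hΨd t ht
      have h2 : HasDerivAt (fun t' : ℝ => s0 * t' - Φ s0) s0 t := by
        simpa using ((hasDerivAt_id t).const_mul s0).sub_const (Φ s0)
      exact h1.sub h2
    have h5 := hloc.hasDerivAt_eq_zero hder
    linarith
  -- chain rule: Φ''(Ψ'(t)) Ψ''(t) = 1
  have hchain : ∀ t ∈ Ioi (0:ℝ), deriv (deriv Φ) (deriv Ψ t) * deriv (deriv Ψ) t = 1 := by
    intro t ht
    obtain ⟨hw, hweq⟩ := hψeq t ht
    have h1 : HasDerivAt (fun t' => deriv Φ (deriv Ψ t'))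
        (deriv (deriv Φ) (deriv Ψ t) * deriv (deriv Ψ) t) t :=
      (hΦ'd _ hw).comp t (hΨ'd t ht)
    have h2 : HasDerivAt (fun t' => deriv Φ (deriv Ψ t')) 1 t := by
      have heq : (fun t' => deriv Φ (deriv Ψ t')) =ᶠ[nhds t] id := by
        filter_upwards [isOpen_Ioi.mem_nhds ht] with x hx
        exact (hψeq x hx).2
      exact (hasDerivAt_id t).congr_of_eventuallyEq heq
    exact h1.unique h2
  have hψ''le : ∀ t ∈ Ioi (0:ℝ), mt * (t * deriv (deriv Ψ) t) ≤ deriv Ψ t := by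
    intro t ht
    obtain ⟨hw, hweq⟩ := hψeq t ht
    have h1 := hmtfact (deriv Ψ t) hw
    have h2 := hchain t ht
    have h3 := hΨ'' t ht
    have h4 := hΦ'' _ hw
    calc mt * (t * deriv (deriv Ψ) t)
        = (mt * deriv Φ (deriv Ψ t)) * deriv (deriv Ψ) t := by rw [hweq]; ring
      _ ≤ (deriv Ψ t * deriv (deriv Φ) (deriv Ψ t)) * deriv (deriv Ψ) t :=
          mul_le_mul_of_nonneg_right h1 h3.le
      _ = deriv Ψ t * (deriv (deriv Φ) (deriv Ψ t) * deriv (deriv Ψ) t) := by ring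
      _ = deriv Ψ t := by rw [h2, mul_one]
  -- integral bound 1
  have hIbound : ∀ w : ℝ, 0 < w →
      (mt - 1) * ∫ s in Ioc (0:ℝ) w, deriv Φ s / s ^ 2 ≤ deriv Φ w / w := by
    intro w hw
    have hB : 0 ≤ deriv Φ w / w := (div_pos (hφpos w hw) hw).le
    have key := aux_integral (fun s => deriv Φ s / s)
      (fun s => (deriv (deriv Φ) s * s - deriv Φ s * 1) / s ^ 2)
      (fun s => (mt - 1) * (deriv Φ s / s ^ 2)) w (deriv Φ w / w) hw hB
      ?_ ?_ ?_ ?_ ?_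
    · rwa [MeasureTheory.integral_const_mul] at key
    · exact continuousOn_const.mul (hΦ'c.div (continuousOn_id.pow 2)
        (fun x hx => pow_ne_zero 2 (ne_of_gt hx)))
    · intro s hs
      exact (hΦ'd s hs).div (hasDerivAt_id s) (ne_of_gt hs)
    · exact (((hΦ''c.mul continuousOn_id).sub (hΦ'c.mul continuousOn_const)).div
        (continuousOn_id.pow 2) (fun x hx => pow_ne_zero 2 (ne_of_gt hx)))
    · intro s hs
      have h1 := hmtfact s hs
      have hs' : (0:ℝ) < s := hs
      show (mt - 1) * (deriv Φ s / s ^ 2) ≤ (deriv (deriv Φ) s * s - deriv Φ s * 1) / s ^ 2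
      rw [← mul_div_assoc]
      apply div_le_div_of_nonneg_right ?_ (by positivity)
      · linarith
    · intro ε hε
      have h1 : 0 ≤ deriv Φ ε / ε := (div_pos (hφpos ε hε.1) hε.1).le
      linarith
  -- integral bound 2
  have hJbound : ∀ w : ℝ, 0 < w →
      (1 - 1/mt) * ∫ s in Ioc (0:ℝ) w, (deriv Ψ s)⁻¹ ≤ w / deriv Ψ w := by
    intro w hw
    have hψw := (hψeq w hw).1
    have hψwpos : (0:ℝ) < deriv Ψ w := hψw
    have hB : 0 ≤ w / deriv Ψ w := (div_pos hw hψwpos).le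
    have hψpos' : ∀ x ∈ Ioi (0:ℝ), deriv Ψ x ≠ 0 := fun x hx => ne_of_gt (hψeq x hx).1
    have key := aux_integral (fun s => s / deriv Ψ s)
      (fun s => (1 * deriv Ψ s - s * deriv (deriv Ψ) s) / deriv Ψ s ^ 2)
      (fun s => (1 - 1/mt) * (deriv Ψ s)⁻¹) w (w / deriv Ψ w) hw hB
      ?_ ?_ ?_ ?_ ?_
    · rwa [MeasureTheory.integral_const_mul] at key
    · exact continuousOn_const.mul (hΨ'c.inv₀ hψpos')
    · intro s hs
      exact (hasDerivAt_id s).div (hΨ'd s hs) (hψpos' s hs)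
    · exact ((continuousOn_const.mul hΨ'c).sub (continuousOn_id.mul hΨ''c)).div
        ((hΨ'c.pow 2)) (fun x hx => pow_ne_zero 2 (hψpos' x hx))
    · intro s hs
      have h1 := hψ''le s hs
      have h2 : (0:ℝ) < deriv Ψ s := (hψeq s hs).1
      show (1 - 1/mt) * (deriv Ψ s)⁻¹ ≤ (1 * deriv Ψ s - s * deriv (deriv Ψ) s) / deriv Ψ s ^ 2
      have h5 : s * deriv (deriv Ψ) s ≤ deriv Ψ s / mt := by
        rw [le_div_iff₀ hmt0]
        nlinarith [h1]
      have key : (1 - 1/mt) * (deriv Ψ s)⁻¹ = (deriv Ψ s - deriv Ψ s / mt) / deriv Ψ s ^ 2 := by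
        field_simp
      rw [key]
      apply div_le_div_of_nonneg_right ?_ (by positivity)
      linarith
    · intro ε hε
      have h1 : 0 ≤ ε / deriv Ψ ε := (div_pos hε.1 (hψeq ε hε.1).1).le
      linarith
  -- main argument
  intro u v
  set a := ‖u‖ with ha_def
  set b := ‖v‖ with hb_def
  have ha : 0 ≤ a := norm_nonneg u
  have hb : 0 ≤ b := norm_nonneg v
  set K := max 1 (M / mt) with hK_def
  have hK1 : (1:ℝ) ≤ K := le_max_left _ _
  have hKM : M / mt ≤ K := le_max_right _ _
  have hΦa : 0 ≤ Φ a := hΦnonneg a ha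
  have hΨb : 0 ≤ Ψ b := hΨnonneg b hb
  by_cases hcase : b ≤ deriv Φ a
  · rw [hXlow u v hcase, ← ha_def, ← hb_def]
    rcases eq_or_lt_of_le ha with hA | hA
    · rw [← hA]
      rw [Set.Ioc_self, MeasureTheory.Measure.restrict_empty, MeasureTheory.integral_zero_measure, h0Φ]
      nlinarith [mul_le_mul_of_nonneg_right hK1 hΨb, mul_le_mul_of_nonneg_right hδsmall hΨb]
    · have hI := hIbound a hA
      have hInn : 0 ≤ ∫ s in Ioc (0:ℝ) a, deriv Φ s / s ^ 2 := by
        apply setIntegral_nonneg measurableSet_Ioc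
        intro x hx
        have := hφpos x hx.1
        positivity
      set I := ∫ s in Ioc (0:ℝ) a, deriv Φ s / s ^ 2 with hI_def
      have k2 : a * deriv Φ a ≤ M * Φ a := hMfact a hA
      have s1 : δ * a^2 * ((mt - 1) * I) ≤ δ * a^2 * (deriv Φ a / a) :=
        mul_le_mul_of_nonneg_left hI (by positivity)
      have s2 : δ * a^2 * (deriv Φ a / a) = δ * (a * deriv Φ a) := by
        field_simp
      have s3 : δ * (a * deriv Φ a) ≤ δ * (M * Φ a) := mul_le_mul_of_nonneg_left k2 hδ0.le
      have s4 : δ * (M * Φ a) ≤ ((mt - 1)/(100*mt)) * (M * Φ a) := by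
        apply mul_le_mul_of_nonneg_right hδ
        positivity
      have s5 : (mt - 1) * (δ * a^2 * I) ≤ (mt - 1) * ((M * Φ a) / (100 * mt)) := by
        have e1 : (mt - 1) * (δ * a^2 * I) = δ * a^2 * ((mt - 1) * I) := by ring
        have e2 : (mt - 1) * ((M * Φ a) / (100 * mt)) = ((mt - 1)/(100*mt)) * (M * Φ a) := by
          field_simp
        rw [e1, e2]
        linarith
      have s6 : δ * a^2 * I ≤ (M * Φ a) / (100 * mt) :=
        le_of_mul_le_mul_left (by linarith) hmtm1
      have s7 : (M * Φ a) / (100 * mt) = (M / mt) * Φ a / 100 := by ring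
      have s8 : (M / mt) * Φ a ≤ K * Φ a := mul_le_mul_of_nonneg_right hKM hΦa
      have hP : 0 ≤ Φ a + Ψ b := by linarith
      have s9 : δ * a^2 * I ≤ K * Φ a / 100 := by
        rw [s7] at s6
        linarith
      nlinarith [mul_le_mul_of_nonneg_right hK1 hP, mul_le_mul_of_nonneg_right hδsmall hP,
        mul_le_mul_of_nonneg_right hK1 hΨb]
  · push_neg at hcase
    rw [hXup u v hcase, ← ha_def, ← hb_def]
    rcases eq_or_lt_of_le ha with hA | hA
    · rw [← hA]
      rw [h0Φ]
      have he : ((0:ℝ))^2 = 0 := by norm_num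
      rw [he]
      nlinarith [mul_le_mul_of_nonneg_right hK1 hΨb, mul_le_mul_of_nonneg_right hδsmall hΨb]
    · have hφa := hφpos a hA
      have hb0 : (0:ℝ) < b := lt_trans hφa hcase
      have hJ := hJbound b hb0
      have hJnn : 0 ≤ ∫ s in Ioc (0:ℝ) b, (deriv Ψ s)⁻¹ := by
        apply setIntegral_nonneg measurableSet_Ioc
        intro x hx
        have hxx : (0:ℝ) < deriv Ψ x := (hψeq x hx.1).1
        positivity
      set J := ∫ s in Ioc (0:ℝ) b, (deriv Ψ s)⁻¹ with hJ_def
      obtain ⟨hw, hweq⟩ := hψeq b hb0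
      have hwpos : (0:ℝ) < deriv Ψ b := hw
      have hub : a < deriv Ψ b := by
        by_contra h
        push_neg at h
        have := (hφmono.le_iff_le hw hA).mpr h
        rw [hweq] at this
        linarith
      have hc : (0:ℝ) < 1 - 1/mt := by
        have : 1/mt < 1 := by
          rw [div_lt_one hmt0]
          exact hmt1
        linarith
      have t1 : δ * a^2 * ((1 - 1/mt) * J) ≤ δ * a^2 * (b / deriv Ψ b) :=
        mul_le_mul_of_nonneg_left hJ (by positivity)
      have t2 : a^2 * (b / deriv Ψ b) ≤ a * b := by
        rw [← mul_div_assoc, div_le_iff₀ hwpos]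
        nlinarith [mul_le_mul_of_nonneg_right hub.le (mul_nonneg ha hb)]
      have t3 : δ * a^2 * (b / deriv Ψ b) ≤ δ * (a * b) := by
        have := mul_le_mul_of_nonneg_left t2 hδ0.le
        calc δ * a^2 * (b / deriv Ψ b) = δ * (a^2 * (b / deriv Ψ b)) := by ring
          _ ≤ δ * (a * b) := this
      have hδ' : δ ≤ (1 - 1/mt)/100 := by
        have he : (mt - 1)/(100*mt) = (1 - 1/mt)/100 := by
          have h0 : (1 : ℝ) - 1/mt = (mt - 1)/mt := by field_simp
          rw [h0, div_div]
          ring_nf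
        linarith [hδ.trans_eq he]
      have t4 : δ * (a * b) ≤ ((1 - 1/mt)/100) * (a * b) :=
        mul_le_mul_of_nonneg_right hδ' (by positivity)
      have t5 : (1 - 1/mt) * (δ * a^2 * J) ≤ (1 - 1/mt) * ((a * b)/100) := by
        have e1 : (1 - 1/mt) * (δ * a^2 * J) = δ * a^2 * ((1 - 1/mt) * J) := by ring
        have e2 : (1 - 1/mt) * ((a * b)/100) = ((1 - 1/mt)/100) * (a * b) := by ring
        rw [e1, e2]
        linarith
      have t6 : δ * a^2 * J ≤ (a * b)/100 := le_of_mul_le_mul_left (by linarith) hc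
      have hY := hYoung a b ha hb
      have hP : 0 ≤ Φ a + Ψ b := by linarith
      nlinarith [mul_le_mul_of_nonneg_right hK1 hP]
end

section
/- Let R: (0,∞) → ℝ be C² and define 𝔛₂(u,v) := |u|² R(|v|) on (ℂ∖{0})². For any A, B ∈ ℂ^{d×d}, (u,v) ∈ (ℂ∖{0})², (ζ,η) ∈ (ℂ^d)², the generalized Hessian after the substitution ζ → (u/|u|)ζ, η → (v/|v|)η equals Re⟨Aζ, 2R(|v|)ζ + 2|u|R'(|v|)Re η⟩ + Re⟨Bη, 2|u|R'(|v|)Re ζ + |u|²R''(|v|)Re η + i|u|²(R'(|v|)/|v|)Im η⟩. -/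
open Set

/-- Partial derivative of `f : ℝ⁴ → ℝ` in the `i`-th coordinate. -/
noncomputable def pderiv4 (i : Fin 4) (f : (Fin 4 → ℝ) → ℝ) (x : Fin 4 → ℝ) : ℝ :=
  deriv (fun t => f (Function.update x i t)) (x i)

/-- `(i,j)` entry of the real Hessian of `f : ℝ⁴ → ℝ` at `x`. -/
noncomputable def hessEntry (f : (Fin 4 → ℝ) → ℝ) (x : Fin 4 → ℝ) (i j : Fin 4) : ℝ :=
  pderiv4 i (fun y => pderiv4 j f y) x

/-- A function `𝔛 : ℂ² → ℝ` viewed as a function of `(Re u, Im u, Re v, Im v) ∈ ℝ⁴`. -/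
noncomputable def realify (X : ℂ → ℂ → ℝ) : (Fin 4 → ℝ) → ℝ :=
  fun x => X (⟨x 0, x 1⟩ : ℂ) (⟨x 2, x 3⟩ : ℂ)

/-- The generalized Hessian `H^{A,B}_𝔛[(u,v);(ζ,η)]`. -/
noncomputable def genHess {d : ℕ} (X : ℂ → ℂ → ℝ) (A B : Matrix (Fin d) (Fin d) ℂ)
    (u v : ℂ) (ζ η : Fin d → ℂ) : ℝ :=
  let w : Fin 4 → Fin d → ℝ :=
    ![fun k => (ζ k).re, fun k => (ζ k).im, fun k => (η k).re, fun k => (η k).im]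
  let Mw : Fin 4 → Fin d → ℝ :=
    ![fun k => (A.mulVec ζ k).re, fun k => (A.mulVec ζ k).im,
      fun k => (B.mulVec η k).re, fun k => (B.mulVec η k).im]
  let x : Fin 4 → ℝ := ![u.re, u.im, v.re, v.im]
  ∑ i : Fin 4, ∑ j : Fin 4,
    hessEntry (realify X) x i j * ∑ k : Fin d, w j k * Mw i k

/-- The (unnormalized) complex inner product `⟨x, y⟩ = ∑ₖ xₖ ȳₖ` on `ℂ^d`. -/
noncomputable def cinner {d : ℕ} (x y : Fin d → ℂ) : ℂ :=
  ∑ k, x k * (starRingEnd ℂ) (y k)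

noncomputable def F (R : ℝ → ℝ) : (Fin 4 → ℝ) → ℝ :=
  fun y => ((y 0)^2 + (y 1)^2) * R (Real.sqrt ((y 2)^2 + (y 3)^2))

section
variable (R : ℝ → ℝ)

theorem dR1 (hR : ContDiffOn ℝ 2 R (Ioi 0)) {x : ℝ} (hx : 0 < x) : HasDerivAt R (deriv R x) x :=
  ((hR.differentiableOn (by norm_num)).differentiableAt (Ioi_mem_nhds hx)).hasDerivAt

theorem dR2 (hR : ContDiffOn ℝ 2 R (Ioi 0)) {x : ℝ} (hx : 0 < x) : HasDerivAt (deriv R) (deriv (deriv R) x) x := by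
  have h2 : ContDiffOn ℝ 1 (deriv R) (Ioi 0) :=
    ((contDiffOn_succ_iff_deriv_of_isOpen (n := 1) isOpen_Ioi).mp (by exact_mod_cast hR)).2.2
  exact ((h2.differentiableOn one_ne_zero).differentiableAt (Ioi_mem_nhds hx)).hasDerivAt

theorem hsq1 {k x : ℝ} (h : 0 < x^2 + k) :
    HasDerivAt (fun t => Real.sqrt (t^2 + k)) (x / Real.sqrt (x^2 + k)) x := by
  have h1 : HasDerivAt (fun t : ℝ => t^2 + k) (2*x) x := by
    simpa using ((hasDerivAt_pow 2 x).add_const k)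
  have h2 := (Real.hasDerivAt_sqrt h.ne').comp x h1
  refine h2.congr_deriv ?_
  rw [div_mul_eq_mul_div, one_mul, mul_div_mul_left _ _ (two_ne_zero' ℝ)]

theorem hsq2 {k x : ℝ} (h : 0 < k + x^2) :
    HasDerivAt (fun t => Real.sqrt (k + t^2)) (x / Real.sqrt (k + x^2)) x := by
  have h1 : HasDerivAt (fun t : ℝ => k + t^2) (2*x) x := by
    simpa using ((hasDerivAt_pow 2 x).const_add k)
  have h2 := (Real.hasDerivAt_sqrt h.ne').comp x h1
  refine h2.congr_deriv ?_
  rw [div_mul_eq_mul_div, one_mul, mul_div_mul_left _ _ (two_ne_zero' ℝ)]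

theorem P0 (y : Fin 4 → ℝ) :
    pderiv4 0 (F R) y = 2 * y 0 * R (Real.sqrt ((y 2)^2 + (y 3)^2)) := by
  have he : (fun t => F R (Function.update y 0 t))
      = fun t => (t^2 + (y 1)^2) * R (Real.sqrt ((y 2)^2 + (y 3)^2)) := by
    funext t; simp [F, Function.update]
  rw [pderiv4, he]
  simpa using (((hasDerivAt_pow 2 (y 0)).add_const ((y 1)^2)).mul_const
      (R (Real.sqrt ((y 2)^2 + (y 3)^2)))).deriv

theorem P1 (y : Fin 4 → ℝ) :
    pderiv4 1 (F R) y = 2 * y 1 * R (Real.sqrt ((y 2)^2 + (y 3)^2)) := by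
  have he : (fun t => F R (Function.update y 1 t))
      = fun t => ((y 0)^2 + t^2) * R (Real.sqrt ((y 2)^2 + (y 3)^2)) := by
    funext t; simp [F, Function.update]
  rw [pderiv4, he]
  have h : HasDerivAt (fun t : ℝ => ((y 0)^2 + t^2) * R (Real.sqrt ((y 2)^2 + (y 3)^2)))
      (2 * y 1 * R (Real.sqrt ((y 2)^2 + (y 3)^2))) (y 1) := by
    simpa using (((hasDerivAt_pow 2 (y 1)).const_add ((y 0)^2)).mul_const
      (R (Real.sqrt ((y 2)^2 + (y 3)^2))))
  exact h.deriv

theorem P2 (hR : ContDiffOn ℝ 2 R (Ioi 0)) (y : Fin 4 → ℝ) (h : 0 < (y 2)^2 + (y 3)^2) :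
    pderiv4 2 (F R) y = ((y 0)^2 + (y 1)^2) *
      (deriv R (Real.sqrt ((y 2)^2 + (y 3)^2)) * (y 2 / Real.sqrt ((y 2)^2 + (y 3)^2))) := by
  have he : (fun t => F R (Function.update y 2 t))
      = fun t => ((y 0)^2 + (y 1)^2) * R (Real.sqrt (t^2 + (y 3)^2)) := by
    funext t; simp [F, Function.update]
  rw [pderiv4, he]
  exact ((((dR1 R hR (Real.sqrt_pos.mpr h)).comp (y 2) (hsq1 h))).const_mul _).deriv

theorem P3 (hR : ContDiffOn ℝ 2 R (Ioi 0)) (y : Fin 4 → ℝ) (h : 0 < (y 2)^2 + (y 3)^2) :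
    pderiv4 3 (F R) y = ((y 0)^2 + (y 1)^2) *
      (deriv R (Real.sqrt ((y 2)^2 + (y 3)^2)) * (y 3 / Real.sqrt ((y 2)^2 + (y 3)^2))) := by
  have he : (fun t => F R (Function.update y 3 t))
      = fun t => ((y 0)^2 + (y 1)^2) * R (Real.sqrt ((y 2)^2 + t^2)) := by
    funext t; simp [F, Function.update]
  rw [pderiv4, he]
  exact ((((dR1 R hR (Real.sqrt_pos.mpr h)).comp (y 3) (hsq2 h))).const_mul _).deriv

end

section
variable (R : ℝ → ℝ) (hR : ContDiffOn ℝ 2 R (Ioi 0))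
variable (x : Fin 4 → ℝ) (hx : 0 < (x 2)^2 + (x 3)^2)

local notation "rr" => Real.sqrt ((x 2)^2 + (x 3)^2)

theorem H00 : hessEntry (F R) x 0 0 = 2 * R rr := by
  have he : (fun t => pderiv4 0 (F R) (Function.update x 0 t)) = fun t => 2 * t * R rr := by
    funext t; rw [P0]; simp [Function.update]
  show deriv (fun t => pderiv4 0 (F R) (Function.update x 0 t)) (x 0) = _
  rw [he]
  simpa using (((hasDerivAt_id (x 0)).const_mul 2).mul_const (R rr)).deriv

theorem H01 : hessEntry (F R) x 0 1 = 0 := by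
  have he : (fun t => pderiv4 1 (F R) (Function.update x 0 t)) = fun _ => 2 * x 1 * R rr := by
    funext t; rw [P1]; simp [Function.update]
  show deriv (fun t => pderiv4 1 (F R) (Function.update x 0 t)) (x 0) = _
  rw [he]; exact deriv_const _ _

theorem H10 : hessEntry (F R) x 1 0 = 0 := by
  have he : (fun t => pderiv4 0 (F R) (Function.update x 1 t)) = fun _ => 2 * x 0 * R rr := by
    funext t; rw [P0]; simp [Function.update]
  show deriv (fun t => pderiv4 0 (F R) (Function.update x 1 t)) (x 1) = _
  rw [he]; exact deriv_const _ _

theorem H11 : hessEntry (F R) x 1 1 = 2 * R rr := by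
  have he : (fun t => pderiv4 1 (F R) (Function.update x 1 t)) = fun t => 2 * t * R rr := by
    funext t; rw [P1]; simp [Function.update]
  show deriv (fun t => pderiv4 1 (F R) (Function.update x 1 t)) (x 1) = _
  rw [he]
  simpa using (((hasDerivAt_id (x 1)).const_mul 2).mul_const (R rr)).deriv

theorem H02 (hR : ContDiffOn ℝ 2 R (Ioi 0)) (hx : 0 < (x 2)^2 + (x 3)^2) : hessEntry (F R) x 0 2 = 2 * x 0 * (deriv R rr * (x 2 / rr)) := by
  have he : (fun t => pderiv4 2 (F R) (Function.update x 0 t))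
      = fun t => (t^2 + (x 1)^2) * (deriv R rr * (x 2 / rr)) := by
    funext t
    rw [P2 R hR _ (by simpa [Function.update] using hx)]
    simp [Function.update]
  show deriv (fun t => pderiv4 2 (F R) (Function.update x 0 t)) (x 0) = _
  rw [he]
  simpa using (((hasDerivAt_pow 2 (x 0)).add_const ((x 1)^2)).mul_const
    (deriv R rr * (x 2 / rr))).deriv

theorem H03 (hR : ContDiffOn ℝ 2 R (Ioi 0)) (hx : 0 < (x 2)^2 + (x 3)^2) : hessEntry (F R) x 0 3 = 2 * x 0 * (deriv R rr * (x 3 / rr)) := by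
  have he : (fun t => pderiv4 3 (F R) (Function.update x 0 t))
      = fun t => (t^2 + (x 1)^2) * (deriv R rr * (x 3 / rr)) := by
    funext t
    rw [P3 R hR _ (by simpa [Function.update] using hx)]
    simp [Function.update]
  show deriv (fun t => pderiv4 3 (F R) (Function.update x 0 t)) (x 0) = _
  rw [he]
  simpa using (((hasDerivAt_pow 2 (x 0)).add_const ((x 1)^2)).mul_const
    (deriv R rr * (x 3 / rr))).deriv

theorem H12 (hR : ContDiffOn ℝ 2 R (Ioi 0)) (hx : 0 < (x 2)^2 + (x 3)^2) : hessEntry (F R) x 1 2 = 2 * x 1 * (deriv R rr * (x 2 / rr)) := by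
  have he : (fun t => pderiv4 2 (F R) (Function.update x 1 t))
      = fun t => ((x 0)^2 + t^2) * (deriv R rr * (x 2 / rr)) := by
    funext t
    rw [P2 R hR _ (by simpa [Function.update] using hx)]
    simp [Function.update]
  show deriv (fun t => pderiv4 2 (F R) (Function.update x 1 t)) (x 1) = _
  rw [he]
  simpa using (((hasDerivAt_pow 2 (x 1)).const_add ((x 0)^2)).mul_const
    (deriv R rr * (x 2 / rr))).deriv

theorem H13 (hR : ContDiffOn ℝ 2 R (Ioi 0)) (hx : 0 < (x 2)^2 + (x 3)^2) : hessEntry (F R) x 1 3 = 2 * x 1 * (deriv R rr * (x 3 / rr)) := by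
  have he : (fun t => pderiv4 3 (F R) (Function.update x 1 t))
      = fun t => ((x 0)^2 + t^2) * (deriv R rr * (x 3 / rr)) := by
    funext t
    rw [P3 R hR _ (by simpa [Function.update] using hx)]
    simp [Function.update]
  show deriv (fun t => pderiv4 3 (F R) (Function.update x 1 t)) (x 1) = _
  rw [he]
  simpa using (((hasDerivAt_pow 2 (x 1)).const_add ((x 0)^2)).mul_const
    (deriv R rr * (x 3 / rr))).deriv

theorem H20 (hR : ContDiffOn ℝ 2 R (Ioi 0)) (hx : 0 < (x 2)^2 + (x 3)^2) : hessEntry (F R) x 2 0 = 2 * x 0 * (deriv R rr * (x 2 / rr)) := by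
  have he : (fun t => pderiv4 0 (F R) (Function.update x 2 t))
      = fun t => 2 * x 0 * R (Real.sqrt (t^2 + (x 3)^2)) := by
    funext t; rw [P0]; simp [Function.update]
  show deriv (fun t => pderiv4 0 (F R) (Function.update x 2 t)) (x 2) = _
  rw [he]
  have h := (((dR1 R hR (Real.sqrt_pos.mpr hx)).comp (x 2) (hsq1 hx)).const_mul
    (2 * x 0)).deriv
  simpa [mul_assoc, Function.comp] using h

theorem H21 (hR : ContDiffOn ℝ 2 R (Ioi 0)) (hx : 0 < (x 2)^2 + (x 3)^2) : hessEntry (F R) x 2 1 = 2 * x 1 * (deriv R rr * (x 2 / rr)) := by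
  have he : (fun t => pderiv4 1 (F R) (Function.update x 2 t))
      = fun t => 2 * x 1 * R (Real.sqrt (t^2 + (x 3)^2)) := by
    funext t; rw [P1]; simp [Function.update]
  show deriv (fun t => pderiv4 1 (F R) (Function.update x 2 t)) (x 2) = _
  rw [he]
  have h := (((dR1 R hR (Real.sqrt_pos.mpr hx)).comp (x 2) (hsq1 hx)).const_mul
    (2 * x 1)).deriv
  simpa [mul_assoc, Function.comp] using h

theorem H30 (hR : ContDiffOn ℝ 2 R (Ioi 0)) (hx : 0 < (x 2)^2 + (x 3)^2) : hessEntry (F R) x 3 0 = 2 * x 0 * (deriv R rr * (x 3 / rr)) := by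
  have he : (fun t => pderiv4 0 (F R) (Function.update x 3 t))
      = fun t => 2 * x 0 * R (Real.sqrt ((x 2)^2 + t^2)) := by
    funext t; rw [P0]; simp [Function.update]
  show deriv (fun t => pderiv4 0 (F R) (Function.update x 3 t)) (x 3) = _
  rw [he]
  have h := (((dR1 R hR (Real.sqrt_pos.mpr hx)).comp (x 3) (hsq2 hx)).const_mul
    (2 * x 0)).deriv
  simpa [mul_assoc, Function.comp] using h

theorem H31 (hR : ContDiffOn ℝ 2 R (Ioi 0)) (hx : 0 < (x 2)^2 + (x 3)^2) : hessEntry (F R) x 3 1 = 2 * x 1 * (deriv R rr * (x 3 / rr)) := by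
  have he : (fun t => pderiv4 1 (F R) (Function.update x 3 t))
      = fun t => 2 * x 1 * R (Real.sqrt ((x 2)^2 + t^2)) := by
    funext t; rw [P1]; simp [Function.update]
  show deriv (fun t => pderiv4 1 (F R) (Function.update x 3 t)) (x 3) = _
  rw [he]
  have h := (((dR1 R hR (Real.sqrt_pos.mpr hx)).comp (x 3) (hsq2 hx)).const_mul
    (2 * x 1)).deriv
  simpa [mul_assoc, Function.comp] using h

end

section
variable (R : ℝ → ℝ)
variable (x : Fin 4 → ℝ)

local notation "rr" => Real.sqrt ((x 2)^2 + (x 3)^2)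

theorem H22 (hR : ContDiffOn ℝ 2 R (Ioi 0)) (hx : 0 < (x 2)^2 + (x 3)^2) :
    hessEntry (F R) x 2 2 = ((x 0)^2 + (x 1)^2) *
      (deriv (deriv R) rr * ((x 2)^2 / rr^2) + deriv R rr * ((x 3)^2 / rr^3)) := by
  have hrpos := Real.sqrt_pos.mpr hx
  have hr2 : rr^2 = (x 2)^2 + (x 3)^2 := Real.sq_sqrt hx.le
  have hop : IsOpen {t : ℝ | 0 < t^2 + (x 3)^2} :=
    isOpen_lt continuous_const (by continuity)
  have hev : (fun t => pderiv4 2 (F R) (Function.update x 2 t)) =ᶠ[nhds (x 2)]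
      (fun t => ((x 0)^2 + (x 1)^2) *
        (deriv R (Real.sqrt (t^2 + (x 3)^2)) * (t / Real.sqrt (t^2 + (x 3)^2)))) := by
    filter_upwards [hop.mem_nhds (show x 2 ∈ _ from hx)] with t ht
    rw [P2 R hR _ (by simpa [Function.update] using ht)]
    simp [Function.update]
  show deriv (fun t => pderiv4 2 (F R) (Function.update x 2 t)) (x 2) = _
  rw [hev.deriv_eq]
  have h1 : HasDerivAt (fun t => deriv R (Real.sqrt (t^2 + (x 3)^2)))
      (deriv (deriv R) rr * (x 2 / rr)) (x 2) := by
      have := (dR2 R hR hrpos).comp (x 2) (hsq1 hx)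
      exact this
  have h2 : HasDerivAt (fun t => t / Real.sqrt (t^2 + (x 3)^2))
      ((1 * rr - x 2 * (x 2 / rr)) / rr^2) (x 2) :=
    (hasDerivAt_id (x 2)).div (hsq1 hx) hrpos.ne'
  have h4 : deriv (fun t => ((x 0)^2 + (x 1)^2) *
        (deriv R (Real.sqrt (t^2 + (x 3)^2)) * (t / Real.sqrt (t^2 + (x 3)^2)))) (x 2)
      = ((x 0)^2 + (x 1)^2) * (deriv (deriv R) rr * (x 2 / rr) * (x 2 / rr)
        + deriv R rr * ((1 * rr - x 2 * (x 2 / rr)) / rr^2)) :=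
    ((h1.mul h2).const_mul _).deriv
  rw [h4]
  generalize rr = r at hr2 hrpos ⊢
  rw [show (x 3)^2 = r^2 - (x 2)^2 by linarith]
  field_simp

theorem H23 (hR : ContDiffOn ℝ 2 R (Ioi 0)) (hx : 0 < (x 2)^2 + (x 3)^2) :
    hessEntry (F R) x 2 3 = ((x 0)^2 + (x 1)^2) *
      (deriv (deriv R) rr * (x 2 * x 3 / rr^2) - deriv R rr * (x 2 * x 3 / rr^3)) := by
  have hrpos := Real.sqrt_pos.mpr hx
  have hr2 : rr^2 = (x 2)^2 + (x 3)^2 := Real.sq_sqrt hx.le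
  have hop : IsOpen {t : ℝ | 0 < t^2 + (x 3)^2} :=
    isOpen_lt continuous_const (by continuity)
  have hev : (fun t => pderiv4 3 (F R) (Function.update x 2 t)) =ᶠ[nhds (x 2)]
      (fun t => ((x 0)^2 + (x 1)^2) *
        (deriv R (Real.sqrt (t^2 + (x 3)^2)) * (x 3 / Real.sqrt (t^2 + (x 3)^2)))) := by
    filter_upwards [hop.mem_nhds (show x 2 ∈ _ from hx)] with t ht
    rw [P3 R hR _ (by simpa [Function.update] using ht)]
    simp [Function.update]
  show deriv (fun t => pderiv4 3 (F R) (Function.update x 2 t)) (x 2) = _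
  rw [hev.deriv_eq]
  have h1 : HasDerivAt (fun t => deriv R (Real.sqrt (t^2 + (x 3)^2)))
      (deriv (deriv R) rr * (x 2 / rr)) (x 2) := by
      have := (dR2 R hR hrpos).comp (x 2) (hsq1 hx)
      exact this
  have h2 : HasDerivAt (fun t => x 3 / Real.sqrt (t^2 + (x 3)^2))
      ((0 * rr - x 3 * (x 2 / rr)) / rr^2) (x 2) :=
    (hasDerivAt_const (x 2) (x 3)).div (hsq1 hx) hrpos.ne'
  have h4 : deriv (fun t => ((x 0)^2 + (x 1)^2) *
        (deriv R (Real.sqrt (t^2 + (x 3)^2)) * (x 3 / Real.sqrt (t^2 + (x 3)^2)))) (x 2)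
      = ((x 0)^2 + (x 1)^2) * (deriv (deriv R) rr * (x 2 / rr) * (x 3 / rr)
        + deriv R rr * ((0 * rr - x 3 * (x 2 / rr)) / rr^2)) :=
    ((h1.mul h2).const_mul _).deriv
  rw [h4]
  generalize rr = r at hr2 hrpos ⊢
  field_simp
  ring

theorem H32 (hR : ContDiffOn ℝ 2 R (Ioi 0)) (hx : 0 < (x 2)^2 + (x 3)^2) :
    hessEntry (F R) x 3 2 = ((x 0)^2 + (x 1)^2) *
      (deriv (deriv R) rr * (x 2 * x 3 / rr^2) - deriv R rr * (x 2 * x 3 / rr^3)) := by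
  have hrpos := Real.sqrt_pos.mpr hx
  have hr2 : rr^2 = (x 2)^2 + (x 3)^2 := Real.sq_sqrt hx.le
  have hop : IsOpen {t : ℝ | 0 < (x 2)^2 + t^2} :=
    isOpen_lt continuous_const (by continuity)
  have hev : (fun t => pderiv4 2 (F R) (Function.update x 3 t)) =ᶠ[nhds (x 3)]
      (fun t => ((x 0)^2 + (x 1)^2) *
        (deriv R (Real.sqrt ((x 2)^2 + t^2)) * (x 2 / Real.sqrt ((x 2)^2 + t^2)))) := by
    filter_upwards [hop.mem_nhds (show x 3 ∈ _ from hx)] with t ht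
    rw [P2 R hR _ (by simpa [Function.update] using ht)]
    simp [Function.update]
  show deriv (fun t => pderiv4 2 (F R) (Function.update x 3 t)) (x 3) = _
  rw [hev.deriv_eq]
  have h1 : HasDerivAt (fun t => deriv R (Real.sqrt ((x 2)^2 + t^2)))
      (deriv (deriv R) rr * (x 3 / rr)) (x 3) := by
      have := (dR2 R hR hrpos).comp (x 3) (hsq2 hx)
      exact this
  have h2 : HasDerivAt (fun t => x 2 / Real.sqrt ((x 2)^2 + t^2))
      ((0 * rr - x 2 * (x 3 / rr)) / rr^2) (x 3) :=
    (hasDerivAt_const (x 3) (x 2)).div (hsq2 hx) hrpos.ne'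
  have h4 : deriv (fun t => ((x 0)^2 + (x 1)^2) *
        (deriv R (Real.sqrt ((x 2)^2 + t^2)) * (x 2 / Real.sqrt ((x 2)^2 + t^2)))) (x 3)
      = ((x 0)^2 + (x 1)^2) * (deriv (deriv R) rr * (x 3 / rr) * (x 2 / rr)
        + deriv R rr * ((0 * rr - x 2 * (x 3 / rr)) / rr^2)) :=
    ((h1.mul h2).const_mul _).deriv
  rw [h4]
  generalize rr = r at hr2 hrpos ⊢
  field_simp
  ring

theorem H33 (hR : ContDiffOn ℝ 2 R (Ioi 0)) (hx : 0 < (x 2)^2 + (x 3)^2) :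
    hessEntry (F R) x 3 3 = ((x 0)^2 + (x 1)^2) *
      (deriv (deriv R) rr * ((x 3)^2 / rr^2) + deriv R rr * ((x 2)^2 / rr^3)) := by
  have hrpos := Real.sqrt_pos.mpr hx
  have hr2 : rr^2 = (x 2)^2 + (x 3)^2 := Real.sq_sqrt hx.le
  have hop : IsOpen {t : ℝ | 0 < (x 2)^2 + t^2} :=
    isOpen_lt continuous_const (by continuity)
  have hev : (fun t => pderiv4 3 (F R) (Function.update x 3 t)) =ᶠ[nhds (x 3)]
      (fun t => ((x 0)^2 + (x 1)^2) *
        (deriv R (Real.sqrt ((x 2)^2 + t^2)) * (t / Real.sqrt ((x 2)^2 + t^2)))) := by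
    filter_upwards [hop.mem_nhds (show x 3 ∈ _ from hx)] with t ht
    rw [P3 R hR _ (by simpa [Function.update] using ht)]
    simp [Function.update]
  show deriv (fun t => pderiv4 3 (F R) (Function.update x 3 t)) (x 3) = _
  rw [hev.deriv_eq]
  have h1 : HasDerivAt (fun t => deriv R (Real.sqrt ((x 2)^2 + t^2)))
      (deriv (deriv R) rr * (x 3 / rr)) (x 3) := by
      have := (dR2 R hR hrpos).comp (x 3) (hsq2 hx)
      exact this
  have h2 : HasDerivAt (fun t => t / Real.sqrt ((x 2)^2 + t^2))
      ((1 * rr - x 3 * (x 3 / rr)) / rr^2) (x 3) :=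
    (hasDerivAt_id (x 3)).div (hsq2 hx) hrpos.ne'
  have h4 : deriv (fun t => ((x 0)^2 + (x 1)^2) *
        (deriv R (Real.sqrt ((x 2)^2 + t^2)) * (t / Real.sqrt ((x 2)^2 + t^2)))) (x 3)
      = ((x 0)^2 + (x 1)^2) * (deriv (deriv R) rr * (x 3 / rr) * (x 3 / rr)
        + deriv R rr * ((1 * rr - x 3 * (x 3 / rr)) / rr^2)) :=
    ((h1.mul h2).const_mul _).deriv
  rw [h4]
  generalize rr = r at hr2 hrpos ⊢
  rw [show (x 2)^2 = r^2 - (x 3)^2 by linarith]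
  field_simp

end

theorem generalized_hessian_of_mixed_term {d : ℕ}
    (R : ℝ → ℝ) (hR : ContDiffOn ℝ 2 R (Ioi 0))
    (A B : Matrix (Fin d) (Fin d) ℂ)
    (u v : ℂ) (hu : u ≠ 0) (hv : v ≠ 0) (ζ η : Fin d → ℂ) :
    genHess (fun a b => (‖a‖) ^ 2 * R (‖b‖)) A B u v
        (fun k => (u / (‖u‖ : ℂ)) * ζ k)
        (fun k => (v / (‖v‖ : ℂ)) * η k)
    = (cinner (A.mulVec ζ) (fun k =>
        (((2 * R (‖v‖) : ℝ) : ℂ)) * ζ k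
        + (((2 * ‖u‖ * deriv R (‖v‖) : ℝ) : ℂ)) * (((η k).re : ℝ) : ℂ))).re
    + (cinner (B.mulVec η) (fun k =>
        (((2 * ‖u‖ * deriv R (‖v‖) : ℝ) : ℂ)) * (((ζ k).re : ℝ) : ℂ)
        + ((((‖u‖) ^ 2 * deriv (deriv R) (‖v‖) : ℝ) : ℂ)) * (((η k).re : ℝ) : ℂ)
        + Complex.I * ((((‖u‖) ^ 2 * (deriv R (‖v‖) / ‖v‖) : ℝ) : ℂ)) * (((η k).im : ℝ) : ℂ))).re := by
  have hFX : realify (fun a b => (‖a‖) ^ 2 * R (‖b‖)) = F R := by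
    funext y
    simp only [realify, F, Complex.norm_def, Complex.normSq_mk]
    rw [show y 0 * y 0 + y 1 * y 1 = y 0 ^ 2 + y 1 ^ 2 by ring,
      show y 2 * y 2 + y 3 * y 3 = y 2 ^ 2 + y 3 ^ 2 by ring,
      Real.sq_sqrt (by positivity)]
  have hvx : 0 < (v.re)^2 + (v.im)^2 := by
    have := Complex.normSq_pos.mpr hv
    simpa [Complex.normSq_apply, sq] using this
  have habsv : Real.sqrt ((v.re)^2 + (v.im)^2) = ‖v‖ := by
    rw [Complex.norm_def, Complex.normSq_apply]; ring_nf
  have hs2 : (‖u‖)^2 = u.re^2 + u.im^2 := by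
    rw [Complex.sq_norm, Complex.normSq_apply]; ring
  have hr2 : (‖v‖)^2 = v.re^2 + v.im^2 := by
    rw [Complex.sq_norm, Complex.normSq_apply]; ring
  have hspos : 0 < ‖u‖ := norm_pos_iff.mpr hu
  have hrpos : 0 < ‖v‖ := norm_pos_iff.mpr hv
  have hx : 0 < ((![u.re, u.im, v.re, v.im] : Fin 4 → ℝ) 2)^2
      + ((![u.re, u.im, v.re, v.im] : Fin 4 → ℝ) 3)^2 := by simpa using hvx
  have e00 : hessEntry (F R) ![u.re, u.im, v.re, v.im] 0 0 = 2 * R (‖v‖) := by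
    have := H00 R ![u.re, u.im, v.re, v.im]
    simpa [habsv] using this
  have e01 : hessEntry (F R) ![u.re, u.im, v.re, v.im] 0 1 = 0 := H01 R _
  have e10 : hessEntry (F R) ![u.re, u.im, v.re, v.im] 1 0 = 0 := H10 R _
  have e11 : hessEntry (F R) ![u.re, u.im, v.re, v.im] 1 1 = 2 * R (‖v‖) := by
    have := H11 R ![u.re, u.im, v.re, v.im]
    simpa [habsv] using this
  have e02 : hessEntry (F R) ![u.re, u.im, v.re, v.im] 0 2
      = 2 * u.re * (deriv R (‖v‖) * (v.re / ‖v‖)) := by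
    have := H02 R ![u.re, u.im, v.re, v.im] hR hx
    simpa [habsv] using this
  have e03 : hessEntry (F R) ![u.re, u.im, v.re, v.im] 0 3
      = 2 * u.re * (deriv R (‖v‖) * (v.im / ‖v‖)) := by
    have := H03 R ![u.re, u.im, v.re, v.im] hR hx
    simpa [habsv] using this
  have e12 : hessEntry (F R) ![u.re, u.im, v.re, v.im] 1 2
      = 2 * u.im * (deriv R (‖v‖) * (v.re / ‖v‖)) := by
    have := H12 R ![u.re, u.im, v.re, v.im] hR hx
    simpa [habsv] using this
  have e13 : hessEntry (F R) ![u.re, u.im, v.re, v.im] 1 3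
      = 2 * u.im * (deriv R (‖v‖) * (v.im / ‖v‖)) := by
    have := H13 R ![u.re, u.im, v.re, v.im] hR hx
    simpa [habsv] using this
  have e20 : hessEntry (F R) ![u.re, u.im, v.re, v.im] 2 0
      = 2 * u.re * (deriv R (‖v‖) * (v.re / ‖v‖)) := by
    have := H20 R ![u.re, u.im, v.re, v.im] hR hx
    simpa [habsv] using this
  have e21 : hessEntry (F R) ![u.re, u.im, v.re, v.im] 2 1
      = 2 * u.im * (deriv R (‖v‖) * (v.re / ‖v‖)) := by
    have := H21 R ![u.re, u.im, v.re, v.im] hR hx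
    simpa [habsv] using this
  have e30 : hessEntry (F R) ![u.re, u.im, v.re, v.im] 3 0
      = 2 * u.re * (deriv R (‖v‖) * (v.im / ‖v‖)) := by
    have := H30 R ![u.re, u.im, v.re, v.im] hR hx
    simpa [habsv] using this
  have e31 : hessEntry (F R) ![u.re, u.im, v.re, v.im] 3 1
      = 2 * u.im * (deriv R (‖v‖) * (v.im / ‖v‖)) := by
    have := H31 R ![u.re, u.im, v.re, v.im] hR hx
    simpa [habsv] using this
  have e22 : hessEntry (F R) ![u.re, u.im, v.re, v.im] 2 2
      = (u.re^2 + u.im^2) * (deriv (deriv R) (‖v‖) * (v.re^2 / (‖v‖)^2)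
        + deriv R (‖v‖) * (v.im^2 / (‖v‖)^3)) := by
    have := H22 R ![u.re, u.im, v.re, v.im] hR hx
    simpa [habsv] using this
  have e23 : hessEntry (F R) ![u.re, u.im, v.re, v.im] 2 3
      = (u.re^2 + u.im^2) * (deriv (deriv R) (‖v‖) * (v.re * v.im / (‖v‖)^2)
        - deriv R (‖v‖) * (v.re * v.im / (‖v‖)^3)) := by
    have := H23 R ![u.re, u.im, v.re, v.im] hR hx
    simpa [habsv] using this
  have e32 : hessEntry (F R) ![u.re, u.im, v.re, v.im] 3 2
      = (u.re^2 + u.im^2) * (deriv (deriv R) (‖v‖) * (v.re * v.im / (‖v‖)^2)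
        - deriv R (‖v‖) * (v.re * v.im / (‖v‖)^3)) := by
    have := H32 R ![u.re, u.im, v.re, v.im] hR hx
    simpa [habsv] using this
  have e33 : hessEntry (F R) ![u.re, u.im, v.re, v.im] 3 3
      = (u.re^2 + u.im^2) * (deriv (deriv R) (‖v‖) * (v.im^2 / (‖v‖)^2)
        + deriv R (‖v‖) * (v.re^2 / (‖v‖)^3)) := by
    have := H33 R ![u.re, u.im, v.re, v.im] hR hx
    simpa [habsv] using this
  have hAm : ∀ k, A.mulVec (fun k => (u / (‖u‖ : ℂ)) * ζ k) k
      = (u / (‖u‖ : ℂ)) * A.mulVec ζ k := by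
    intro k
    simp only [Matrix.mulVec, dotProduct, Finset.mul_sum]
    exact Finset.sum_congr rfl fun j _ => by ring
  have hBm : ∀ k, B.mulVec (fun k => (v / (‖v‖ : ℂ)) * η k) k
      = (v / (‖v‖ : ℂ)) * B.mulVec η k := by
    intro k
    simp only [Matrix.mulVec, dotProduct, Finset.mul_sum]
    exact Finset.sum_congr rfl fun j _ => by ring
  simp only [genHess, hFX, Fin.sum_univ_four, Matrix.cons_val_zero, Matrix.cons_val_one,
    Matrix.head_cons, Matrix.cons_val_two, Matrix.tail_cons, Matrix.cons_val_three,
    Matrix.head_fin_const]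
  rw [e00, e01, e02, e03, e10, e11, e12, e13, e20, e21, e22, e23, e30, e31, e32, e33]
  simp only [cinner, Complex.re_sum, hAm, hBm]
  rw [← Finset.sum_add_distrib]
  simp only [Finset.mul_sum, ← Finset.sum_add_distrib, zero_mul, zero_add, add_zero]
  refine Finset.sum_congr rfl fun k _ => ?_
  simp only [Complex.mul_re, Complex.mul_im, Complex.add_re, Complex.add_im, map_add, map_mul,
    Complex.conj_re, Complex.conj_im, Complex.conj_ofReal, Complex.ofReal_re, Complex.ofReal_im,
    Complex.div_ofReal_re, Complex.div_ofReal_im, Complex.I_re, Complex.I_im,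
    Complex.ofReal_mul]
  have hs2' : (‖u‖)^2 = u.re^2 + u.im^2 := hs2
  have hr2' : (‖v‖)^2 = v.re^2 + v.im^2 := hr2
  have hsi2' : ((‖u‖)⁻¹)^2 * (u.re^2 + u.im^2) = 1 := by
    rw [← hs2]; field_simp
  have hri2' : ((‖v‖)⁻¹)^2 * (v.re^2 + v.im^2) = 1 := by
    rw [← hr2]; field_simp
  have hsis' : (‖u‖)⁻¹ * (u.re^2 + u.im^2) = ‖u‖ := by
    rw [← hs2]; field_simp
  linear_combination (norm := ring)
    (-1*(deriv (deriv R) (‖v‖))*((η k).re)*((B.mulVec η k).re) + -1*(deriv R (‖v‖))*((‖v‖)⁻¹)*((η k).im)*((B.mulVec η k).im)) * hs2'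
    + (2*(R (‖v‖))*((ζ k).im)*((A.mulVec ζ k).im) + 2*(R (‖v‖))*((ζ k).re)*((A.mulVec ζ k).re)) * hsi2'
    + ((deriv (deriv R) (‖v‖))*(u.im)^2*((η k).re)*((B.mulVec η k).re) + (deriv (deriv R) (‖v‖))*(u.im)^2*(v.im)^2*((‖v‖)⁻¹)^2*((η k).re)*((B.mulVec η k).re) + (deriv (deriv R) (‖v‖))*(u.im)^2*(v.re)^2*((‖v‖)⁻¹)^2*((η k).re)*((B.mulVec η k).re) + (deriv (deriv R) (‖v‖))*(u.re)^2*((η k).re)*((B.mulVec η k).re) + (deriv (deriv R) (‖v‖))*(u.re)^2*(v.im)^2*((‖v‖)⁻¹)^2*((η k).re)*((B.mulVec η k).re) + (deriv (deriv R) (‖v‖))*(u.re)^2*(v.re)^2*((‖v‖)⁻¹)^2*((η k).re)*((B.mulVec η k).re) + (deriv R (‖v‖))*(u.im)^2*((‖v‖)⁻¹)*((η k).im)*((B.mulVec η k).im) + 2*(deriv R (‖v‖))*(u.im)^2*((‖u‖)⁻¹)*((η k).re)*((A.mulVec ζ k).re) + 2*(deriv R (‖v‖))*(u.im)^2*((‖u‖)⁻¹)*((ζ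 k).re)*((B.mulVec η k).re) + (deriv R (‖v‖))*(u.im)^2*(v.im)^2*((‖v‖)⁻¹)^3*((η k).im)*((B.mulVec η k).im) + (deriv R (‖v‖))*(u.im)^2*(v.re)^2*((‖v‖)⁻¹)^3*((η k).im)*((B.mulVec η k).im) + (deriv R (‖v‖))*(u.re)^2*((‖v‖)⁻¹)*((η k).im)*((B.mulVec η k).im) + 2*(deriv R (‖v‖))*(u.re)^2*((‖u‖)⁻¹)*((η k).re)*((A.mulVec ζ k).re) + 2*(deriv R (‖v‖))*(u.re)^2*((‖u‖)⁻¹)*((ζ k).re)*((B.mulVec η k).re) + (deriv R (‖v‖))*(u.re)^2*(v.im)^2*((‖v‖)⁻¹)^3*((η k).im)*((B.mulVec η k).im) + (deriv R (‖v‖))*(u.re)^2*(v.re)^2*((‖v‖)⁻¹)^3*((η k).im)*((B.mulVec η k).im)) * hri2'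
    + (2*(deriv R (‖v‖))*((η k).re)*((A.mulVec ζ k).re) + 2*(deriv R (‖v‖))*((ζ k).re)*((B.mulVec η k).re)) * hsis'
end
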